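/- arXiv:1601.04173 — 8 statements merged into one kernel-verified Lean document; each statement's English description precedes it below -/
import Mathlib

section
/- Let A, B, C, D be mutually commuting bounded linear operators on a Banach space X with C∘A + D∘B = I. Then for every positive integer n, the kernel of Aⁿ is contained in the range of Bⁿ. Consequently, the generalized kernel N^∞(A) = ⋃ₙ N(Aⁿ) is contained in the hyper-range R^∞(B) = ⋂ₙ R(Bⁿ). -/
section Aux

variable {X : Type*} [NormedAddCommGroup X] [NormedSpace ℂ X]

/-- Key algebraic lemma: there is `S` commuting with everything with
`C*A*S + (D*B)^m = 1`. -/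
lemma stmt3_key (A B C D : X →L[ℂ] X)
    (hAB : Commute A B) (hAC : Commute A C) (hAD : Commute A D)
    (hBC : Commute B C) (hBD : Commute B D) (hCD : Commute C D)
    (h : C * A + D * B = 1) (m : ℕ) :
    ∃ S : X →L[ℂ] X, Commute A S ∧ Commute B S ∧ Commute C S ∧ Commute D S ∧
      C * A * S + (D * B) ^ m = 1 := by
  induction m with
  | zero =>
    exact ⟨0, Commute.zero_right A, Commute.zero_right B, Commute.zero_right C,
      Commute.zero_right D, by simp⟩
  | succ m ih =>
    obtain ⟨S, hAS, hBS, hCS, hDS, hS⟩ := ih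
    refine ⟨S * (D * B) + 1, (hAS.mul_right (hAD.mul_right hAB)).add_right (Commute.one_right A),
      (hBS.mul_right (hBD.mul_right (Commute.refl B))).add_right (Commute.one_right B),
      (hCS.mul_right (hCD.mul_right hBC.symm)).add_right (Commute.one_right C),
      (hDS.mul_right ((Commute.refl D).mul_right hBD.symm)).add_right (Commute.one_right D), ?_⟩
    have e : C * A * (S * (D * B) + 1) + (D * B) ^ (m + 1)
        = (C * A * S + (D * B) ^ m) * (D * B) + C * A := by
      rw [pow_succ]; noncomm_ring
    rw [e, hS, one_mul, add_comm (D * B) (C * A), h]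

/-- Main claim: `ker (A^n) ⊆ range (B^m)` for all `n m`. -/
lemma stmt3_main (A B C D : X →L[ℂ] X)
    (hAB : Commute A B) (hAC : Commute A C) (hAD : Commute A D)
    (hBC : Commute B C) (hBD : Commute B D) (hCD : Commute C D)
    (h : C * A + D * B = 1) :
    ∀ n m : ℕ, ∀ x : X, (A ^ n) x = 0 → ∃ y : X, (B ^ m) y = x := by
  intro n
  induction n with
  | zero =>
    intro m x hx
    simp only [pow_zero, ContinuousLinearMap.one_apply] at hx
    exact ⟨0, by simp [hx]⟩
  | succ n ih =>
    intro m x hx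
    have hx' : (A ^ n) (A x) = 0 := by
      rw [← ContinuousLinearMap.mul_apply, ← pow_succ]; exact hx
    obtain ⟨y, hy⟩ := ih m (A x) hx'
    obtain ⟨S, hAS, hBS, hCS, hDS, hS⟩ :=
      stmt3_key A B C D hAB hAC hAD hBC hBD hCD h m
    -- x = (C*A*S) x + ((D*B)^m) x
    have hxeq : (C * A * S) x + ((D * B) ^ m) x = x := by
      have := congrArg (fun T : X →L[ℂ] X => T x) hS
      simpa using this
    have h1 : (C * A * S) x = (B ^ m) ((C * S) y) := by
      have e1 : C * A * S = (C * S) * A := by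
        rw [mul_assoc, hAS.eq, ← mul_assoc]
      have e2 : (C * S) * B ^ m = B ^ m * (C * S) :=
        (((hBC.symm).mul_left (hBS.symm)).pow_right m).eq
      calc (C * A * S) x = (C * S) (A x) := by rw [e1]; rfl
        _ = ((C * S) * B ^ m) y := by rw [← hy]; rfl
        _ = (B ^ m * (C * S)) y := by rw [e2]
        _ = (B ^ m) ((C * S) y) := rfl
    have h2 : ((D * B) ^ m) x = (B ^ m) ((D ^ m) x) := by
      have e1 : (D * B) ^ m = D ^ m * B ^ m := (hBD.symm).mul_pow m
      have e2' : D ^ m * B ^ m = B ^ m * D ^ m := ((hBD.symm).pow_pow m m).eq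
      rw [e1, e2']; rfl
    refine ⟨(C * S) y + (D ^ m) x, ?_⟩
    rw [map_add, ← h1, ← h2, hxeq]

end Aux

/-- Lemma 3.2(3): if `A, B, C, D` are mutually commuting bounded operators with
`C ∘ A + D ∘ B = I`, then for every positive integer `n`, `N(Aⁿ) ⊆ R(Bⁿ)`;
consequently the generalized kernel `N^∞(A) = ⋃ₙ N(Aⁿ)` is contained in the
hyper-range `R^∞(B) = ⋂ₙ R(Bⁿ)`. -/
theorem stmt3 {X : Type*} [NormedAddCommGroup X] [NormedSpace ℂ X] [CompleteSpace X]
    (A B C D : X →L[ℂ] X)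
    (hAB : Commute A B) (hAC : Commute A C) (hAD : Commute A D)
    (hBC : Commute B C) (hBD : Commute B D) (hCD : Commute C D)
    (h : C * A + D * B = 1) :
    (∀ n : ℕ, 0 < n → (LinearMap.ker ((A ^ n : X →L[ℂ] X) : X →ₗ[ℂ] X) : Set X) ⊆ LinearMap.range ((B ^ n : X →L[ℂ] X) : X →ₗ[ℂ] X)) ∧
    (⋃ n : ℕ, (LinearMap.ker ((A ^ n : X →L[ℂ] X) : X →ₗ[ℂ] X) : Set X)) ⊆ ⋂ n : ℕ, (LinearMap.range ((B ^ n : X →L[ℂ] X) : X →ₗ[ℂ] X) : Set X) := by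
  have main := stmt3_main A B C D hAB hAC hAD hBC hBD hCD h
  constructor
  · intro n _ x hx
    rw [SetLike.mem_coe, LinearMap.mem_ker] at hx
    obtain ⟨y, hy⟩ := main n n x hx
    exact ⟨y, hy⟩
  · intro x hx
    simp only [Set.mem_iUnion, SetLike.mem_coe, LinearMap.mem_ker] at hx
    obtain ⟨n, hn⟩ := hx
    simp only [Set.mem_iInter, SetLike.mem_coe, LinearMap.mem_range]
    intro m
    exact main n m x hn
end

section
/- Let S and T be commuting bounded linear operators on a Banach space X. Then the analytic core of the product is contained in the intersection of the analytic cores: K(S∘T) ⊆ K(S) ∩ K(T). -/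
/-- The analytic core `K(T)` of a bounded operator `T`: the set of `x` for which there
exist a backward orbit `(xₙ)` with `x₀ = x`, `T xₙ = x_{n-1}` for `n ≥ 1`, and
`‖xₙ‖ ≤ δⁿ ‖x‖` for some `δ > 0`. -/
def analyticCore {X : Type*} [NormedAddCommGroup X] [NormedSpace ℂ X]
    (T : X →L[ℂ] X) : Set X :=
  {x | ∃ u : ℕ → X, ∃ δ : ℝ, 0 < δ ∧ u 0 = x ∧
    (∀ n : ℕ, 1 ≤ n → T (u n) = u (n - 1)) ∧ ∀ n : ℕ, ‖u n‖ ≤ δ ^ n * ‖x‖}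

lemma analyticCore_mul_subset_left {X : Type*} [NormedAddCommGroup X] [NormedSpace ℂ X]
    (A B : X →L[ℂ] X) (hAB : Commute A B) :
    analyticCore (A * B) ⊆ analyticCore A := by
  rintro x ⟨u, δ, hδ, hu0, hrec, hbound⟩
  refine ⟨fun n => (B ^ n) (u n), (‖B‖ + 1) * δ, by positivity, by simp [hu0], ?_, ?_⟩
  · rintro n hn
    obtain ⟨m, rfl⟩ : ∃ m, n = m + 1 := ⟨n - 1, (Nat.succ_pred_eq_of_pos hn).symm⟩
    have hmul : A * B ^ (m + 1) = B ^ m * (A * B) := by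
      rw [(hAB.pow_right (m + 1)).eq, pow_succ, mul_assoc, ← hAB.eq]
    have := congrArg (fun f : X →L[ℂ] X => f (u (m + 1))) hmul
    simp only [ContinuousLinearMap.mul_apply] at this
    have h2 := hrec (m + 1) (by omega)
    rw [ContinuousLinearMap.mul_apply] at h2
    rw [this, h2]
    simp
  · intro n
    calc ‖(B ^ n) (u n)‖ ≤ ‖B ^ n‖ * ‖u n‖ := ContinuousLinearMap.le_opNorm _ _
      _ ≤ (‖B‖ + 1) ^ n * (δ ^ n * ‖x‖) := by
          apply mul_le_mul _ (hbound n) (norm_nonneg _) (by positivity)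
          have hpow : ‖B ^ n‖ ≤ ‖B‖ ^ n := by
            cases n with
            | zero => simp; exact ContinuousLinearMap.norm_id_le
            | succ m => exact norm_pow_le' _ (Nat.succ_pos m)
          calc ‖B ^ n‖ ≤ ‖B‖ ^ n := hpow
            _ ≤ (‖B‖ + 1) ^ n := by gcongr; linarith
      _ = ((‖B‖ + 1) * δ) ^ n * ‖x‖ := by rw [mul_pow]; ring

/-- If `S` and `T` are commuting bounded operators on a Banach space, then
`K(S ∘ T) ⊆ K(S) ∩ K(T)`. -/
theorem stmt5 {X : Type*} [NormedAddCommGroup X] [NormedSpace ℂ X] [CompleteSpace X]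
    (S T : X →L[ℂ] X) (hST : Commute S T) :
    analyticCore (S * T) ⊆ analyticCore S ∩ analyticCore T := by
  intro x hx
  refine ⟨analyticCore_mul_subset_left S T hST hx, ?_⟩
  rw [hST.eq] at hx
  exact analyticCore_mul_subset_left T S hST.symm hx
end

section
/- Let (T(t))_{t≥0} be a strongly continuous semigroup on a Banach space X with generator A. For every λ ∈ ℂ and t > 0, the quasi-nilpotent part satisfies H₀(λ·I − A) ⊆ H₀(e^{λt}·I − T(t)). -/
open Filter Topology MeasureTheory intervalIntegral

/-- A strongly continuous semigroup of bounded operators on a Banach space `X`. -/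
structure C0Semigroup (X : Type*) [NormedAddCommGroup X] [NormedSpace ℂ X] where
  /-- the family of bounded operators -/
  T : ℝ → X →L[ℂ] X
  map_zero' : T 0 = 1
  map_add' : ∀ s t : ℝ, 0 ≤ s → 0 ≤ t → T (s + t) = T s ∘L T t
  strong_cont' : ∀ x : X, ContinuousOn (fun t => T t x) (Set.Ici (0 : ℝ))

namespace C0Semigroup

variable {X : Type*} [NormedAddCommGroup X] [NormedSpace ℂ X]

/-- The domain of the infinitesimal generator. -/
def genDomain (S : C0Semigroup X) : Set X :=
  {x | ∃ y : X, Tendsto (fun t : ℝ => t⁻¹ • (S.T t x - x)) (𝓝[>] 0) (𝓝 y)}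

/-- `A : X → X` (total function, with junk values outside `D`) together with `D` is
*the* infinitesimal generator of `S` if `D` is exactly the set where the right
derivative of `t ↦ T(t)x` exists at `0`, and `A x` is that derivative for `x ∈ D`. -/
def IsGenerator (S : C0Semigroup X) (A : X → X) (D : Set X) : Prop :=
  D = S.genDomain ∧
    ∀ x ∈ D, Tendsto (fun t : ℝ => t⁻¹ • (S.T t x - x)) (𝓝[>] 0) (𝓝 (A x))

end C0Semigroup

/-- The domain `D(fⁿ)` of the `n`-th power of an operator `f` defined on `D ⊆ X`. -/
def iterDomain {X : Type*} (f : X → X) (D : Set X) : ℕ → Set X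
  | 0 => Set.univ
  | n + 1 => {x ∈ D | f x ∈ iterDomain f D n}

section Aux
set_option linter.unusedSectionVars false
variable {X : Type*} [NormedAddCommGroup X] [NormedSpace ℂ X] [CompleteSpace X]

-- continuity of integrand
lemma aux_contOn (S : C0Semigroup X) (l : ℂ) (t : ℝ) (z : X) :
    ContinuousOn (fun s : ℝ => Complex.exp (l * (↑t - ↑s)) • S.T s z) (Set.Icc 0 t) := by
  apply ContinuousOn.smul
  · exact (Complex.continuous_exp.comp (by continuity)).continuousOn
  · exact (S.strong_cont' z).mono (fun s hs => hs.1)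

lemma aux_intble (S : C0Semigroup X) (l : ℂ) (t : ℝ) (ht : 0 < t) (z : X) :
    IntervalIntegrable (fun s : ℝ => Complex.exp (l * (↑t - ↑s)) • S.T s z) volume 0 t := by
  apply ContinuousOn.intervalIntegrable
  rw [Set.uIcc_of_le ht.le]
  exact aux_contOn S l t z

-- right derivative of orbit
lemma aux_deriv (S : C0Semigroup X) {A : X → X} {x : X}
    (hx : Tendsto (fun h : ℝ => h⁻¹ • (S.T h x - x)) (𝓝[>] 0) (𝓝 (A x)))
    {s : ℝ} (hs : 0 ≤ s) :
    HasDerivWithinAt (fun r : ℝ => S.T r x) (S.T s (A x)) (Set.Ioi s) s := by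
  rw [hasDerivWithinAt_iff_tendsto_slope' (Set.notMem_Ioi_self (a := s))]
  have key : ∀ y ∈ Set.Ioi s, slope (fun r : ℝ => S.T r x) s y
      = S.T s ((y - s)⁻¹ • (S.T (y - s) x - x)) := by
    intro y hy
    have hys : (0:ℝ) ≤ y - s := by simp at hy; linarith
    have : S.T y x = S.T s (S.T (y - s) x) := by
      have := S.map_add' s (y - s) hs hys
      rw [show s + (y - s) = y by ring] at this
      rw [this]; rfl
    rw [slope_def_module, this, ← map_sub, ← ContinuousLinearMap.map_smul_of_tower]
  have h1 : Tendsto (fun y : ℝ => y - s) (𝓝[>] s) (𝓝[>] 0) := by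
    apply tendsto_nhdsWithin_of_tendsto_nhds_of_eventually_within
    · have : Tendsto (fun y : ℝ => y - s) (𝓝 s) (𝓝 (s - s)) := (tendsto_id.sub_const s)
      simpa using this.mono_left nhdsWithin_le_nhds
    · filter_upwards [self_mem_nhdsWithin] with y hy
      simp only [Set.mem_Ioi] at hy ⊢; linarith
  have h2 : Tendsto (fun y : ℝ => S.T s ((y - s)⁻¹ • (S.T (y - s) x - x))) (𝓝[>] s)
      (𝓝 (S.T s (A x))) :=
    ((S.T s).continuous.tendsto _).comp (hx.comp h1)
  exact h2.congr' (by filter_upwards [self_mem_nhdsWithin] with y hy using (key y hy).symm)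

noncomputable def Bfun (S : C0Semigroup X) (l : ℂ) (t : ℝ) (z : X) : X :=
  ∫ s in (0:ℝ)..t, Complex.exp (l * (↑t - ↑s)) • S.T s z

-- key identity: (e^{lt} - T t) x = B ((l - A) x)
lemma aux_key (S : C0Semigroup X) (l : ℂ) (t : ℝ) (ht : 0 < t) {A : X → X} {x : X}
    (hx : Tendsto (fun h : ℝ => h⁻¹ • (S.T h x - x)) (𝓝[>] 0) (𝓝 (A x))) :
    Complex.exp (l * t) • x - S.T t x = Bfun S l t (l • x - A x) := by
  set g : ℝ → X := fun s => Complex.exp (l * (↑t - ↑s)) • S.T s x with hg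
  set G : ℝ → X := fun s => -(Complex.exp (l * (↑t - ↑s)) • S.T s (l • x - A x)) with hG
  have hcont : ContinuousOn g (Set.Icc 0 t) := aux_contOn S l t x
  have hderiv : ∀ s ∈ Set.Ioo (0:ℝ) t, HasDerivWithinAt g (G s) (Set.Ioi s) s := by
    intro s hs
    have hc : HasDerivAt (fun r : ℝ => Complex.exp (l * (↑t - ↑r)))
        (Complex.exp (l * (↑t - ↑s)) * (l * (0 - 1))) s := by
      have h1 : HasDerivAt (fun w : ℂ => Complex.exp (l * (t - w)))
          (Complex.exp (l * (t - (s:ℂ))) * (l * (0 - 1))) (s:ℂ) := by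
        exact (((hasDerivAt_const _ (t:ℂ)).sub (hasDerivAt_id _)).const_mul l).cexp
      exact h1.comp_ofReal
    have hu := aux_deriv S hx hs.1.le
    have := (hc.hasDerivWithinAt (s := Set.Ioi s)).smul hu
    convert this using 1
    case e'_9 =>
      show -(Complex.exp (l * (↑t - ↑s)) • (S.T s) (l • x - A x)) = _
      simp only [map_sub, map_smul]
      module
    case e'_8 => rfl
  have hint : IntervalIntegrable G volume 0 t := (aux_intble S l t ht (l • x - A x)).neg
  have := integral_eq_sub_of_hasDeriv_right_of_le ht.le hcont hderiv hint
  have hI : ∫ s in (0:ℝ)..t, G s = -(Bfun S l t (l • x - A x)) := by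
    rw [Bfun, ← intervalIntegral.integral_neg]
  rw [hI] at this
  have hg0 : g 0 = Complex.exp (l * t) • x := by
    simp [hg, S.map_zero']
  have hgt : g t = S.T t x := by simp [hg]
  rw [hg0, hgt] at this
  linear_combination (norm := module) this

lemma aux_comm (S : C0Semigroup X) (l : ℂ) (t : ℝ) (ht : 0 < t) (z : X) :
    Complex.exp (l * t) • Bfun S l t z - S.T t (Bfun S l t z)
      = Bfun S l t (Complex.exp (l * t) • z - S.T t z) := by
  have hTt : S.T t (Bfun S l t z) = ∫ s in (0:ℝ)..t, Complex.exp (l * (↑t - ↑s)) • S.T s (S.T t z) := by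
    rw [Bfun, ← (S.T t).intervalIntegral_comp_comm (aux_intble S l t ht z)]
    apply intervalIntegral.integral_congr
    intro s hs
    rw [Set.uIcc_of_le ht.le] at hs
    have h1 := S.map_add' s t hs.1 ht.le
    have h2 := S.map_add' t s ht.le hs.1
    rw [add_comm] at h2
    simp only [(S.T t).map_smul]
    congr 1
    have : S.T s ∘L S.T t = S.T t ∘L S.T s := by rw [← h1, ← h2]
    exact (DFunLike.congr_fun this z).symm
  have hsm : Complex.exp (l * t) • Bfun S l t z
      = ∫ s in (0:ℝ)..t, Complex.exp (l * t) • (Complex.exp (l * (↑t - ↑s)) • S.T s z) := by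
    rw [Bfun, intervalIntegral.integral_smul]
  rw [hTt, hsm, Bfun, ← intervalIntegral.integral_sub]
  · apply intervalIntegral.integral_congr
    intro s hs
    simp only [(S.T s).map_sub, (S.T s).map_smul, smul_sub, smul_smul]; ring_nf
  · exact (aux_intble S l t ht z).smul _
  · exact aux_intble S l t ht (S.T t z)

lemma aux_bound (S : C0Semigroup X) (l : ℂ) (t : ℝ) (ht : 0 < t) :
    ∃ C : ℝ, 1 ≤ C ∧ ∀ z : X, ‖Bfun S l t z‖ ≤ C * ‖z‖ := by
  -- uniform bound on the semigroup on [0,t] via Banach–Steinhaus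
  obtain ⟨M, hM⟩ : ∃ M : ℝ, ∀ i : Set.Icc (0:ℝ) t, ‖S.T i‖ ≤ M := by
    apply banach_steinhaus
    intro z
    obtain ⟨C, hC⟩ := (isCompact_Icc (a := (0:ℝ)) (b := t)).exists_bound_of_continuousOn
      ((S.strong_cont' z).mono (fun s hs => hs.1))
    exact ⟨C, fun i => hC i i.2⟩
  have hM0 : 0 ≤ M := le_trans (norm_nonneg _) (hM ⟨0, le_refl 0, ht.le⟩)
  set K := Real.exp (|l.re| * t) with hK
  refine ⟨max (K * M * t) 1, le_max_right _ _, fun z => ?_⟩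
  have hb : ∀ s ∈ Set.uIoc (0:ℝ) t, ‖Complex.exp (l * (↑t - ↑s)) • S.T s z‖ ≤ K * M * ‖z‖ := by
    intro s hs
    rw [Set.uIoc_of_le ht.le] at hs
    rw [norm_smul]
    have h1 : ‖Complex.exp (l * (↑t - ↑s))‖ ≤ K := by
      rw [Complex.norm_exp]
      apply Real.exp_le_exp.2
      have : (l * (↑t - ↑s)).re = l.re * (t - s) := by
        push_cast
        simp [Complex.mul_re]
      rw [this]
      have h2 : t - s ≤ t := by linarith [hs.1]
      have h3 : 0 ≤ t - s := by linarith [hs.2]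
      calc l.re * (t - s) ≤ |l.re| * (t - s) := by
            apply mul_le_mul_of_nonneg_right (le_abs_self _) h3
        _ ≤ |l.re| * t := by apply mul_le_mul_of_nonneg_left h2 (abs_nonneg _)
    have h4 : ‖S.T s z‖ ≤ M * ‖z‖ := by
      calc ‖S.T s z‖ ≤ ‖S.T s‖ * ‖z‖ := (S.T s).le_opNorm z
        _ ≤ M * ‖z‖ := by
            apply mul_le_mul_of_nonneg_right (hM ⟨s, hs.1.le, hs.2⟩) (norm_nonneg _)
    calc ‖Complex.exp (l * (↑t - ↑s))‖ * ‖S.T s z‖ ≤ K * (M * ‖z‖) := by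
          apply mul_le_mul h1 h4 (norm_nonneg _) (Real.exp_nonneg _)
      _ = K * M * ‖z‖ := by ring
  have := intervalIntegral.norm_integral_le_of_norm_le_const hb
  rw [Bfun]
  calc ‖∫ s in (0:ℝ)..t, Complex.exp (l * (↑t - ↑s)) • S.T s z‖
      ≤ K * M * ‖z‖ * |t - 0| := this
    _ = K * M * t * ‖z‖ := by rw [abs_of_pos (by simpa using ht)]; ring
    _ ≤ max (K * M * t) 1 * ‖z‖ := by
        apply mul_le_mul_of_nonneg_right (le_max_left _ _) (norm_nonneg _)

lemma aux_commn (S : C0Semigroup X) (l : ℂ) (t : ℝ) (ht : 0 < t) (n : ℕ) (w : X) :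
    ((Complex.exp (l * t) • (1 : X →L[ℂ] X) - S.T t) ^ n) (Bfun S l t w)
      = Bfun S l t (((Complex.exp (l * t) • (1 : X →L[ℂ] X) - S.T t) ^ n) w) := by
  set E : X →L[ℂ] X := Complex.exp (l * t) • (1 : X →L[ℂ] X) - S.T t with hE
  have hEapp : ∀ z : X, E z = Complex.exp (l * t) • z - S.T t z := by
    intro z; simp [hE]
  induction n generalizing w with
  | zero => simp
  | succ n ih =>
    have h1 : ∀ z : X, (E ^ (n+1)) z = (E ^ n) (E z) := by
      intro z; rw [pow_succ]; rfl
    have hc : E (Bfun S l t w) = Bfun S l t (E w) := by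
      rw [hEapp (Bfun S l t w), hEapp w, aux_comm S l t ht w]
    rw [h1, h1, hc, ih (E w)]

lemma aux_bdn (C : ℝ) (hC : 0 ≤ C) (S : C0Semigroup X) (l : ℂ) (t : ℝ)
    (hCb : ∀ z : X, ‖Bfun S l t z‖ ≤ C * ‖z‖) (n : ℕ) (w : X) :
    ‖(Bfun S l t)^[n] w‖ ≤ C ^ n * ‖w‖ := by
  induction n generalizing w with
  | zero => simp
  | succ n ih =>
    rw [Function.iterate_succ_apply]
    calc ‖(Bfun S l t)^[n] (Bfun S l t w)‖ ≤ C ^ n * ‖Bfun S l t w‖ := ih _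
      _ ≤ C ^ n * (C * ‖w‖) := by
          apply mul_le_mul_of_nonneg_left (hCb w) (pow_nonneg hC n)
      _ = C ^ (n+1) * ‖w‖ := by ring

end Aux

/-- Lemma 2.2(4): the quasi-nilpotent part satisfies `H₀(λ I − A) ⊆ H₀(e^{λt} I − T(t))`
for every `λ ∈ ℂ` and `t > 0`, where
`H₀(S) = {x ∈ ⋂ₙ D(Sⁿ) : ‖Sⁿ x‖^{1/n} → 0}`. -/
theorem stmt11 {X : Type*} [NormedAddCommGroup X] [NormedSpace ℂ X] [CompleteSpace X]
    (S : C0Semigroup X) (A : X → X) (D : Set X) (hgen : S.IsGenerator A D)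
    (l : ℂ) (t : ℝ) (ht : 0 < t) :
    {x : X | (∀ n : ℕ, x ∈ iterDomain (fun x : X => l • x - A x) D n) ∧
        Filter.Tendsto
          (fun n : ℕ => ‖(fun x : X => l • x - A x)^[n] x‖ ^ (1 / (n : ℝ)))
          Filter.atTop (nhds 0)}
      ⊆ {x : X |
        Filter.Tendsto
          (fun n : ℕ => ‖((Complex.exp (l * t) • (1 : X →L[ℂ] X) - S.T t) ^ n) x‖ ^ (1 / (n : ℝ)))
          Filter.atTop (nhds 0)} := by
  rintro x ⟨hdom, hlim⟩
  set F : X → X := fun x : X => l • x - A x with hF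
  set E : X →L[ℂ] X := Complex.exp (l * t) • (1 : X →L[ℂ] X) - S.T t with hE
  have hEapp : ∀ z : X, E z = Complex.exp (l * t) • z - S.T t z := by
    intro z; simp [hE]
  have hkey : ∀ z ∈ D, E z = Bfun S l t (F z) := by
    intro z hz
    rw [hEapp]
    exact aux_key S l t ht (hgen.2 z hz)
  have hiter : ∀ n : ℕ, ∀ z : X, (∀ m, z ∈ iterDomain F D m) →
      (E ^ n) z = (Bfun S l t)^[n] (F^[n] z) := by
    intro n
    induction n with
    | zero => intro z _; simp
    | succ n ih =>
      intro z hz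
      have hzD : z ∈ D := (hz 1).1
      have hFz : ∀ m, F z ∈ iterDomain F D m := fun m => (hz (m+1)).2
      have h1 : (E ^ (n+1)) z = (E ^ n) (E z) := by rw [pow_succ]; rfl
      rw [h1, hkey z hzD, aux_commn S l t ht n (F z), ih (F z) hFz,
        Function.iterate_succ_apply' (Bfun S l t), Function.iterate_succ_apply F]
  obtain ⟨C, hC1, hCb⟩ := aux_bound S l t ht
  have hC0 : (0:ℝ) ≤ C := le_trans zero_le_one hC1
  have hbd : ∀ n : ℕ, ‖(E ^ n) x‖ ≤ C ^ n * ‖F^[n] x‖ := by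
    intro n
    rw [hiter n x hdom]
    exact aux_bdn C hC0 S l t hCb n _
  show Tendsto (fun n : ℕ => ‖(E ^ n) x‖ ^ (1 / (n:ℝ))) atTop (𝓝 0)
  have hlim' : Tendsto (fun n : ℕ => C * ‖F^[n] x‖ ^ (1 / (n:ℝ))) atTop (𝓝 0) := by
    have := hlim.const_mul C
    simpa using this
  apply squeeze_zero' ?_ ?_ hlim'
  · filter_upwards with n
    positivity
  · filter_upwards [eventually_ge_atTop 1] with n hn
    have hn0 : (n:ℝ) ≠ 0 := by positivity
    have h1 : ‖(E ^ n) x‖ ^ (1 / (n:ℝ)) ≤ (C ^ n * ‖F^[n] x‖) ^ (1 / (n:ℝ)) :=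
      Real.rpow_le_rpow (norm_nonneg _) (hbd n) (by positivity)
    have h2 : (C ^ n * ‖F^[n] x‖) ^ (1 / (n:ℝ))
        = (C ^ n : ℝ) ^ (1 / (n:ℝ)) * ‖F^[n] x‖ ^ (1 / (n:ℝ)) :=
      Real.mul_rpow (pow_nonneg hC0 n) (norm_nonneg _)
    have h3 : (C ^ n : ℝ) ^ (1 / (n:ℝ)) = C := by
      rw [← Real.rpow_natCast C n, ← Real.rpow_mul hC0,
        mul_one_div_cancel hn0, Real.rpow_one]
    rw [h2, h3] at h1
    exact h1
end

section
/- Let (T(t))_{t≥0} be a strongly continuous semigroup on a Banach space X with generator A. For every λ ∈ ℂ and t > 0, the analytic core satisfies K(e^{λt}·I − T(t)) ⊆ K(λ·I − A), and the algebraic core satisfies C(e^{λt}·I − T(t)) ⊆ C(λ·I − A). -/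
open Filter Topology MeasureTheory intervalIntegral

section Aux
variable {X : Type*} [NormedAddCommGroup X] [NormedSpace ℂ X] [CompleteSpace X]

noncomputable def gfun (S : C0Semigroup X) (l : ℂ) (t : ℝ) (x : X) : ℝ → X :=
  fun r => Complex.exp (l * (t - r)) • S.T r x

lemma g_cont (S : C0Semigroup X) (l : ℂ) (t : ℝ) (x : X) :
    ContinuousOn (gfun S l t x) (Set.Ici 0) := by
  have h1 : Continuous fun r : ℝ => Complex.exp (l * (t - r)) := by fun_prop
  exact h1.continuousOn.smul (S.strong_cont' x)

lemma g_intble (S : C0Semigroup X) (l : ℂ) (t : ℝ) (x : X) {a b : ℝ}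
    (ha : 0 ≤ a) (hb : 0 ≤ b) : IntervalIntegrable (gfun S l t x) volume a b := by
  apply ((g_cont S l t x).mono ?_).intervalIntegrable
  intro r hr
  rcases Set.mem_uIcc.mp hr with h | h
  · exact le_trans ha h.1
  · exact le_trans hb h.1

lemma avg_tendsto {f : ℝ → X} (hf : ContinuousOn f (Set.Ici 0)) {a : ℝ} (ha : 0 ≤ a) :
    Tendsto (fun s : ℝ => s⁻¹ • ∫ r in a..(a + s), f r) (𝓝[>] 0) (𝓝 (f a)) := by
  rw [Metric.tendsto_nhdsWithin_nhds]
  intro ε hε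
  obtain ⟨δ, hδ, hδ'⟩ := Metric.continuousWithinAt_iff.mp (hf a ha) (ε / 2) (by linarith)
  refine ⟨δ, hδ, ?_⟩
  intro s hs hsd
  have hs0 : 0 < s := hs
  have hsδ : s < δ := by
    rwa [Real.dist_eq, sub_zero, abs_of_pos hs0] at hsd
  have hint : IntervalIntegrable f volume a (a + s) := by
    apply (hf.mono ?_).intervalIntegrable
    intro r hr
    rcases Set.mem_uIcc.mp hr with h | h
    · exact le_trans ha h.1
    · exact le_trans (by linarith) h.1
  have hsub : (∫ r in a..(a + s), f r) - s • f a = ∫ r in a..(a + s), (f r - f a) := by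
    rw [intervalIntegral.integral_sub hint intervalIntegrable_const,
      intervalIntegral.integral_const, add_sub_cancel_left]
  have hbound : ‖∫ r in a..(a + s), (f r - f a)‖ ≤ ε / 2 * s := by
    have := intervalIntegral.norm_integral_le_of_norm_le_const (C := ε / 2)
      (f := fun r => f r - f a) (a := a) (b := a + s) ?_
    · simpa [abs_of_pos hs0] using this
    · intro r hr
      rw [Set.uIoc_of_le (by linarith)] at hr
      have h1 : r ∈ Set.Ici (0 : ℝ) := le_trans ha (le_of_lt hr.1)
      have h2 : dist r a < δ := by
        rw [Real.dist_eq, abs_of_pos (by linarith [hr.1])]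
        linarith [hr.2]
      exact le_of_lt (by simpa [dist_eq_norm] using hδ' h1 h2)
  rw [dist_eq_norm]
  have heq : s⁻¹ • (∫ r in a..(a + s), f r) - f a
      = s⁻¹ • ((∫ r in a..(a + s), f r) - s • f a) := by
    rw [smul_sub, smul_smul, inv_mul_cancel₀ (ne_of_gt hs0), one_smul]
  rw [heq, hsub]
  calc ‖s⁻¹ • ∫ r in a..(a + s), (f r - f a)‖ = s⁻¹ * ‖∫ r in a..(a + s), (f r - f a)‖ := by
        rw [norm_smul, Real.norm_eq_abs, abs_of_pos (by positivity)]
    _ ≤ s⁻¹ * (ε / 2 * s) := by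
        apply mul_le_mul_of_nonneg_left hbound (by positivity)
    _ = ε / 2 := by field_simp
    _ < ε := by linarith

lemma exp_slope (l : ℂ) :
    Tendsto (fun s : ℝ => s⁻¹ • (Complex.exp (l * s) - 1)) (𝓝[>] 0) (𝓝 l) := by
  have h : HasDerivAt (fun s : ℝ => Complex.exp (l * s)) l 0 := by
    have h1 : HasDerivAt (fun z : ℂ => Complex.exp (l * z)) (Complex.exp (l * 0) * (l * 1)) 0 :=
      ((hasDerivAt_id (0 : ℂ)).const_mul l).cexp
    have h2 := h1.comp_ofReal (z := 0)
    simpa using h2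
  have := h.tendsto_slope_zero_right
  simpa using this

end Aux

section Aux2
set_option linter.unusedSectionVars false
variable {X : Type*} [NormedAddCommGroup X] [NormedSpace ℂ X] [CompleteSpace X]

lemma normT_bound (S : C0Semigroup X) (t : ℝ) :
    ∃ C : ℝ, 0 ≤ C ∧ ∀ r ∈ Set.Icc (0:ℝ) t, ‖S.T r‖ ≤ C := by
  have hbdd : ∀ x : X, ∃ M : ℝ, ∀ i : Set.Icc (0:ℝ) t, ‖S.T i x‖ ≤ M := by
    intro x
    obtain ⟨M, hM⟩ := (isCompact_Icc (a := (0:ℝ)) (b := t)).exists_bound_of_continuousOn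
      ((S.strong_cont' x).mono Set.Icc_subset_Ici_self)
    exact ⟨M, fun i => hM i i.2⟩
  obtain ⟨C, hC⟩ := banach_steinhaus (g := fun r : Set.Icc (0:ℝ) t => S.T r) hbdd
  exact ⟨max C 0, le_max_right _ _, fun r hr => le_max_of_le_left (hC ⟨r, hr⟩)⟩

noncomputable def Bf (S : C0Semigroup X) (l : ℂ) (t : ℝ) (x : X) : X :=
  ∫ r in (0:ℝ)..t, gfun S l t x r

lemma Bf_norm (S : C0Semigroup X) (l : ℂ) {t : ℝ} (ht : 0 ≤ t) :
    ∃ K : ℝ, 0 ≤ K ∧ ∀ x : X, ‖Bf S l t x‖ ≤ K * ‖x‖ := by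
  obtain ⟨C, hC0, hC⟩ := normT_bound S t
  refine ⟨Real.exp (|l.re| * t) * C * t, by positivity, fun x => ?_⟩
  have key : ∀ r ∈ Set.uIoc (0:ℝ) t, ‖gfun S l t x r‖ ≤ Real.exp (|l.re| * t) * C * ‖x‖ := by
    intro r hr
    rw [Set.uIoc_of_le ht] at hr
    have hr0 : 0 < r := hr.1
    have hrt : r ≤ t := hr.2
    simp only [gfun]
    rw [norm_smul]
    have h1 : ‖Complex.exp (l * ((t:ℂ) - (r:ℂ)))‖ ≤ Real.exp (|l.re| * t) := by
      rw [Complex.norm_exp]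
      apply Real.exp_le_exp.mpr
      have h2 : (l * ((t:ℂ) - (r:ℂ))).re = l.re * (t - r) := by
        simp [Complex.mul_re]
      rw [h2]
      have h3 : l.re * (t - r) ≤ |l.re| * (t - r) :=
        mul_le_mul_of_nonneg_right (le_abs_self _) (by linarith)
      have h4 : |l.re| * (t - r) ≤ |l.re| * t :=
        mul_le_mul_of_nonneg_left (by linarith) (abs_nonneg _)
      linarith
    have h5 : ‖S.T r x‖ ≤ C * ‖x‖ :=
      le_trans ((S.T r).le_opNorm x)
        (mul_le_mul_of_nonneg_right (hC r ⟨le_of_lt hr0, hrt⟩) (norm_nonneg _))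
    calc ‖Complex.exp (l * ((t:ℂ) - (r:ℂ)))‖ * ‖S.T r x‖
        ≤ Real.exp (|l.re| * t) * (C * ‖x‖) := by
          apply mul_le_mul h1 h5 (norm_nonneg _) (Real.exp_nonneg _)
      _ = Real.exp (|l.re| * t) * C * ‖x‖ := by ring
  have := intervalIntegral.norm_integral_le_of_norm_le_const key
  calc ‖Bf S l t x‖ ≤ Real.exp (|l.re| * t) * C * ‖x‖ * |t - 0| := this
    _ = Real.exp (|l.re| * t) * C * t * ‖x‖ := by rw [sub_zero, abs_of_nonneg ht]; ring

lemma T_comp_Bf (S : C0Semigroup X) (l : ℂ) {t : ℝ} (ht : 0 ≤ t) (x : X) {s : ℝ} (hs : 0 ≤ s) :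
    S.T s (Bf S l t x) = Complex.exp (l * s) • ∫ r in s..(t + s), gfun S l t x r := by
  have h1 : S.T s (Bf S l t x) = ∫ r in (0:ℝ)..t, S.T s (gfun S l t x r) :=
    ((S.T s).intervalIntegral_comp_comm (g_intble S l t x le_rfl ht)).symm
  have h2 : (∫ r in (0:ℝ)..t, S.T s (gfun S l t x r))
      = ∫ r in (0:ℝ)..t, Complex.exp (l * s) • gfun S l t x (r + s) := by
    apply intervalIntegral.integral_congr
    intro r hr
    rw [Set.uIcc_of_le ht] at hr
    have hr0 : 0 ≤ r := hr.1
    simp only [gfun]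
    rw [(S.T s).map_smul, smul_smul, ← Complex.exp_add]
    have hT : S.T s (S.T r x) = S.T (r + s) x := by
      rw [add_comm, S.map_add' s r hs hr0]; rfl
    rw [hT]
    congr 2
    push_cast
    ring
  rw [h1, h2, intervalIntegral.integral_smul]
  congr 1
  have h3 := intervalIntegral.integral_comp_add_right (a := (0:ℝ)) (b := t)
    (fun r => gfun S l t x r) s
  rw [h3, zero_add]

end Aux2

section Aux3
set_option linter.unusedSectionVars false
variable {X : Type*} [NormedAddCommGroup X] [NormedSpace ℂ X] [CompleteSpace X]

lemma Bf_tendsto (S : C0Semigroup X) (l : ℂ) {t : ℝ} (ht : 0 ≤ t) (x : X) :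
    Tendsto (fun s : ℝ => s⁻¹ • (S.T s (Bf S l t x) - Bf S l t x)) (𝓝[>] 0)
      (𝓝 (l • Bf S l t x - (Complex.exp (l * t) • x - S.T t x))) := by
  set g := gfun S l t x with hg
  set B := Bf S l t x with hB
  have key : ∀ s ∈ Set.Ioi (0:ℝ), s⁻¹ • (S.T s B - B)
      = (s⁻¹ • (Complex.exp (l * s) - 1)) • B
        + Complex.exp (l * s) • (s⁻¹ • ∫ r in t..(t + s), g r)
        - Complex.exp (l * s) • (s⁻¹ • ∫ r in (0:ℝ)..(0 + s), g r) := by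
    intro s hs
    have hs0 : (0:ℝ) < s := hs
    rw [T_comp_Bf S l ht x (le_of_lt hs0)]
    have i1 : IntervalIntegrable g volume 0 t := g_intble S l t x le_rfl ht
    have i2 : IntervalIntegrable g volume t (t + s) := g_intble S l t x ht (by linarith)
    have i3 : IntervalIntegrable g volume 0 s := g_intble S l t x le_rfl (le_of_lt hs0)
    have i4 : IntervalIntegrable g volume 0 (t + s) := g_intble S l t x le_rfl (by linarith)
    have split1 : (∫ r in (0:ℝ)..(t + s), g r) = (∫ r in (0:ℝ)..t, g r) + ∫ r in t..(t + s), g r :=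
      (intervalIntegral.integral_add_adjacent_intervals i1 i2).symm
    have split2 : (∫ r in s..(t + s), g r) = (∫ r in (0:ℝ)..(t + s), g r) - ∫ r in (0:ℝ)..s, g r := by
      rw [eq_sub_iff_add_eq, add_comm, intervalIntegral.integral_add_adjacent_intervals i3
        (i3.symm.trans i4)]
    have hBint : B = ∫ r in (0:ℝ)..t, g r := rfl
    rw [split2, split1, ← hBint, zero_add]
    set e := Complex.exp (l * s)
    set I2 := ∫ r in t..(t + s), g r
    set I1 := ∫ r in (0:ℝ)..s, g r
    have lhs_eq : e • (B + I2 - I1) - B = (e - 1) • B + e • I2 - e • I1 := by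
      rw [smul_sub, smul_add, sub_smul, one_smul]
      abel
    rw [lhs_eq, smul_sub, smul_add]
    rw [smul_assoc, smul_comm (s⁻¹ : ℝ) e I2, smul_comm (s⁻¹ : ℝ) e I1]
  have h1 : Tendsto (fun s : ℝ => (s⁻¹ • (Complex.exp (l * s) - 1)) • B) (𝓝[>] 0)
      (𝓝 (l • B)) := (exp_slope l).smul_const B
  have he : Tendsto (fun s : ℝ => Complex.exp (l * s)) (𝓝[>] 0) (𝓝 1) := by
    have hc : Continuous fun s : ℝ => Complex.exp (l * s) := by fun_prop
    have h0 : Tendsto (fun s : ℝ => Complex.exp (l * s)) (𝓝[>] 0)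
        (𝓝 (Complex.exp (l * (0:ℝ)))) := (hc.tendsto 0).mono_left nhdsWithin_le_nhds
    simpa using h0
  have h2 : Tendsto (fun s : ℝ => Complex.exp (l * s) • (s⁻¹ • ∫ r in t..(t + s), g r)) (𝓝[>] 0)
      (𝓝 (S.T t x)) := by
    have havg := avg_tendsto (g_cont S l t x) ht
    have hgt : gfun S l t x t = S.T t x := by simp [gfun]
    have := he.smul havg
    rw [one_smul, hgt] at this
    exact this
  have h3 : Tendsto (fun s : ℝ => Complex.exp (l * s) • (s⁻¹ • ∫ r in (0:ℝ)..(0 + s), g r))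
      (𝓝[>] 0) (𝓝 (Complex.exp (l * t) • x)) := by
    have havg := avg_tendsto (g_cont S l t x) (le_refl (0:ℝ))
    have hg0 : gfun S l t x 0 = Complex.exp (l * t) • x := by
      simp [gfun, S.map_zero']
    have := he.smul havg
    rw [one_smul, hg0] at this
    exact this
  have hfinal := (h1.add h2).sub h3
  have hval : l • B + S.T t x - Complex.exp (l * t) • x
      = l • B - (Complex.exp (l * t) • x - S.T t x) := by abel
  rw [hval] at hfinal
  apply hfinal.congr'
  filter_upwards [self_mem_nhdsWithin] with s hs
  exact (key s hs).symm

end Aux3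

section Aux4
set_option linter.unusedSectionVars false
variable {X : Type*} [NormedAddCommGroup X] [NormedSpace ℂ X] [CompleteSpace X]

lemma Bf_mem (S : C0Semigroup X) {A : X → X} {D : Set X} (hgen : S.IsGenerator A D)
    (l : ℂ) {t : ℝ} (ht : 0 ≤ t) (x : X) :
    Bf S l t x ∈ D ∧
      l • Bf S l t x - A (Bf S l t x) = Complex.exp (l * t) • x - S.T t x := by
  obtain ⟨hD, hA⟩ := hgen
  have htd := Bf_tendsto S l ht x
  have hmem : Bf S l t x ∈ D := by
    rw [hD]; exact ⟨_, htd⟩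
  refine ⟨hmem, ?_⟩
  have huniq := tendsto_nhds_unique (hA _ hmem) htd
  rw [huniq]
  abel

lemma Bf_smul (S : C0Semigroup X) (l : ℂ) {t : ℝ} (ht : 0 ≤ t) (c : ℂ) (x : X) :
    Bf S l t (c • x) = c • Bf S l t x := by
  simp only [Bf]
  rw [← intervalIntegral.integral_smul]
  apply intervalIntegral.integral_congr
  intro r _
  simp only [gfun, (S.T r).map_smul]
  rw [smul_comm]

lemma Bf_sub (S : C0Semigroup X) (l : ℂ) {t : ℝ} (ht : 0 ≤ t) (x y : X) :
    Bf S l t (x - y) = Bf S l t x - Bf S l t y := by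
  simp only [Bf]
  rw [← intervalIntegral.integral_sub (g_intble S l t x le_rfl ht)
    (g_intble S l t y le_rfl ht)]
  apply intervalIntegral.integral_congr
  intro r _
  simp only [gfun, (S.T r).map_sub, smul_sub]

lemma Bf_T_comm (S : C0Semigroup X) (l : ℂ) {t : ℝ} (ht : 0 ≤ t) (x : X) :
    S.T t (Bf S l t x) = Bf S l t (S.T t x) := by
  simp only [Bf]
  rw [← (S.T t).intervalIntegral_comp_comm (g_intble S l t x le_rfl ht)]
  apply intervalIntegral.integral_congr
  intro r hr
  rw [Set.uIcc_of_le ht] at hr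
  have hr0 : 0 ≤ r := hr.1
  simp only [gfun, (S.T t).map_smul]
  congr 1
  rw [← ContinuousLinearMap.comp_apply, ← S.map_add' t r ht hr0, add_comm,
    S.map_add' r t hr0 ht, ContinuousLinearMap.comp_apply]

lemma Bf_Q_comm (S : C0Semigroup X) (l : ℂ) {t : ℝ} (ht : 0 ≤ t) (x : X) :
    Complex.exp (l * t) • Bf S l t x - S.T t (Bf S l t x)
      = Bf S l t (Complex.exp (l * t) • x - S.T t x) := by
  rw [Bf_sub S l ht, Bf_smul S l ht, Bf_T_comm S l ht]

lemma Bf_Q_iter_comm (S : C0Semigroup X) (l : ℂ) {t : ℝ} (ht : 0 ≤ t) (n : ℕ) (x : X) :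
    Complex.exp (l * t) • (Bf S l t)^[n] x - S.T t ((Bf S l t)^[n] x)
      = (Bf S l t)^[n] (Complex.exp (l * t) • x - S.T t x) := by
  induction n with
  | zero => simp
  | succ m ih =>
    rw [Function.iterate_succ_apply', Function.iterate_succ_apply',
      Bf_Q_comm S l ht, ih]

lemma Bf_iter_norm (S : C0Semigroup X) (l : ℂ) {t : ℝ} (ht : 0 ≤ t)
    {K : ℝ} (hK0 : 0 ≤ K) (hK : ∀ x : X, ‖Bf S l t x‖ ≤ K * ‖x‖) (n : ℕ) (x : X) :
    ‖(Bf S l t)^[n] x‖ ≤ K ^ n * ‖x‖ := by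
  induction n with
  | zero => simp
  | succ m ih =>
    rw [Function.iterate_succ_apply']
    calc ‖Bf S l t ((Bf S l t)^[m] x)‖ ≤ K * ‖(Bf S l t)^[m] x‖ := hK _
      _ ≤ K * (K ^ m * ‖x‖) := mul_le_mul_of_nonneg_left ih hK0
      _ = K ^ (m + 1) * ‖x‖ := by ring

end Aux4

/-- Lemma 2.3: for every `λ ∈ ℂ` and `t > 0`, the analytic core satisfies
`K(e^{λt} I − T(t)) ⊆ K(λ I − A)` and the algebraic core satisfies
`C(e^{λt} I − T(t)) ⊆ C(λ I − A)`. -/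
theorem stmt12 {X : Type*} [NormedAddCommGroup X] [NormedSpace ℂ X] [CompleteSpace X]
    (S : C0Semigroup X) (A : X → X) (D : Set X) (hgen : S.IsGenerator A D)
    (l : ℂ) (t : ℝ) (ht : 0 < t) :
    ({x : X | ∃ u : ℕ → X, ∃ δ : ℝ, 0 < δ ∧ u 0 = x ∧
        (∀ n : ℕ, 1 ≤ n → Complex.exp (l * t) • u n - S.T t (u n) = u (n - 1)) ∧
        ∀ n : ℕ, ‖u n‖ ≤ δ ^ n * ‖x‖}
      ⊆ {x : X | ∃ u : ℕ → X, ∃ δ : ℝ, 0 < δ ∧ u 0 = x ∧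
        (∀ n : ℕ, 1 ≤ n → u n ∈ D ∧ l • u n - A (u n) = u (n - 1)) ∧
        ∀ n : ℕ, ‖u n‖ ≤ δ ^ n * ‖x‖}) ∧
    ({x : X | ∃ u : ℕ → X, u 0 = x ∧
        ∀ n : ℕ, 1 ≤ n → Complex.exp (l * t) • u n - S.T t (u n) = u (n - 1)}
      ⊆ {x : X | ∃ u : ℕ → X, u 0 = x ∧
        ∀ n : ℕ, 1 ≤ n → u n ∈ D ∧ l • u n - A (u n) = u (n - 1)}) := by
  have ht' : (0:ℝ) ≤ t := le_of_lt ht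
  have main : ∀ u : ℕ → X,
      (∀ n : ℕ, 1 ≤ n → Complex.exp (l * t) • u n - S.T t (u n) = u (n - 1)) →
      ∀ n : ℕ, 1 ≤ n → (Bf S l t)^[n] (u n) ∈ D ∧
        l • (Bf S l t)^[n] (u n) - A ((Bf S l t)^[n] (u n))
          = (Bf S l t)^[n - 1] (u (n - 1)) := by
    intro u hrec n hn
    obtain ⟨m, rfl⟩ : ∃ m, n = m + 1 := ⟨n - 1, (Nat.succ_pred_eq_of_pos hn).symm⟩
    rw [Function.iterate_succ_apply']
    refine ⟨(Bf_mem S hgen l ht' _).1, ?_⟩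
    rw [(Bf_mem S hgen l ht' _).2, Bf_Q_iter_comm S l ht' m (u (m + 1)),
      hrec (m + 1) le_add_self]
    simp
  constructor
  · rintro x ⟨u, δ, hδ, hu0, hrec, hnorm⟩
    obtain ⟨K, hK0, hK⟩ := Bf_norm S l ht'
    refine ⟨fun n => (Bf S l t)^[n] (u n), (K + 1) * δ, by positivity, by simp [hu0],
      fun n hn => main u hrec n hn, ?_⟩
    intro n
    calc ‖(Bf S l t)^[n] (u n)‖ ≤ K ^ n * ‖u n‖ := Bf_iter_norm S l ht' hK0 hK n (u n)
      _ ≤ K ^ n * (δ ^ n * ‖x‖) :=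
          mul_le_mul_of_nonneg_left (hnorm n) (pow_nonneg hK0 n)
      _ ≤ ((K + 1) * δ) ^ n * ‖x‖ := by
          rw [mul_pow, ← mul_assoc]
          apply mul_le_mul_of_nonneg_right _ (norm_nonneg x)
          apply mul_le_mul_of_nonneg_right _ (pow_nonneg (le_of_lt hδ) n)
          exact pow_le_pow_left₀ hK0 (by linarith) n
  · rintro x ⟨u, hu0, hrec⟩
    exact ⟨fun n => (Bf S l t)^[n] (u n), by simp [hu0], fun n hn => main u hrec n hn⟩
end

section
/- Let (T(t))_{t≥0} be a strongly continuous semigroup on a Banach space X with generator A, and fix t₀ > 0 and λ ∈ ℂ. Define B(λ,t₀)x = ∫₀^{t₀} e^{λ(t₀−s)} T(s)x ds, C = (1/t₀) ∫₀^{t₀} e^{−λs} B(λ,s) ds (as a bounded operator), and D = (1/t₀) e^{−λt₀}·I. Then for all x ∈ D(A): C (λ·I − A) x + D B(λ,t₀) x = x, and the operators λ·I − A, B(λ,t₀), C, D mutually commute on D(A). -/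
open Filter Topology MeasureTheory intervalIntegral

/-- `B(λ,t) x = ∫₀ᵗ e^{λ(t−s)} T(s) x ds`. -/
noncomputable def Bop {X : Type*} [NormedAddCommGroup X] [NormedSpace ℂ X]
    [CompleteSpace X] (S : C0Semigroup X) (l : ℂ) (t : ℝ) (x : X) : X :=
  ∫ s in (0:ℝ)..t, Complex.exp (l * (t - s)) • S.T s x

/-- `C = (1/t₀) ∫₀^{t₀} e^{−λs} B(λ,s) ds` (pointwise Bochner integral). -/
noncomputable def Cop {X : Type*} [NormedAddCommGroup X] [NormedSpace ℂ X]
    [CompleteSpace X] (S : C0Semigroup X) (l : ℂ) (t₀ : ℝ) (x : X) : X :=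
  (t₀ : ℂ)⁻¹ • ∫ s in (0:ℝ)..t₀, Complex.exp (-(l * s)) • Bop S l s x

set_option linter.unusedSectionVars false
set_option linter.unusedVariables false
set_option maxHeartbeats 1000000

section helpers
variable {X : Type*} [NormedAddCommGroup X] [NormedSpace ℂ X] [CompleteSpace X]
  (S : C0Semigroup X) {A : X → X} {D : Set X} (l : ℂ)

/-- local uniform bound on operator norms -/
lemma exists_bound (t₀ : ℝ) : ∃ M : ℝ, 1 ≤ M ∧ ∀ s ∈ Set.Icc (0:ℝ) t₀, ‖S.T s‖ ≤ M := by
  obtain ⟨C, hC⟩ := banach_steinhaus (g := fun s : Set.Icc (0:ℝ) t₀ => S.T s.1) (fun x => by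
    obtain ⟨C, hC⟩ := (isCompact_Icc.image_of_continuousOn
      ((S.strong_cont' x).mono (Set.Icc_subset_Ici_self : Set.Icc (0:ℝ) t₀ ⊆ Set.Ici 0)).norm).bddAbove
    exact ⟨C, fun i => hC ⟨i.1, i.2, rfl⟩⟩)
  refine ⟨max C 1, le_max_right _ _, fun s hs => le_trans (hC ⟨s, hs⟩) (le_max_left _ _)⟩

lemma T_cont (x : X) {a b : ℝ} (ha : 0 ≤ a) : ContinuousOn (fun s => S.T s x) (Set.Icc a b) :=
  (S.strong_cont' x).mono (fun s hs => le_trans ha hs.1)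

lemma T_swap {u v : ℝ} (hu : 0 ≤ u) (hv : 0 ≤ v) (x : X) :
    S.T u (S.T v x) = S.T v (S.T u x) := by
  have h1 := S.map_add' u v hu hv
  have h2 := S.map_add' v u hv hu
  rw [add_comm] at h1
  have := h1.symm.trans h2
  calc S.T u (S.T v x) = (S.T u ∘L S.T v) x := rfl
    _ = (S.T v ∘L S.T u) x := by rw [← this]
    _ = S.T v (S.T u x) := rfl

/-- if the generator-limit exists, membership and value of A -/
lemma gen_spec (hgen : S.IsGenerator A D) {y z : X}
    (hy : Tendsto (fun t : ℝ => t⁻¹ • (S.T t y - y)) (𝓝[>] 0) (𝓝 z)) :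
    y ∈ D ∧ A y = z := by
  have hmem : y ∈ D := hgen.1 ▸ ⟨z, hy⟩
  exact ⟨hmem, tendsto_nhds_unique (hgen.2 y hmem) hy⟩

end helpers

section core
variable {X : Type*} [NormedAddCommGroup X] [NormedSpace ℂ X] [CompleteSpace X]
  (S : C0Semigroup X) {A : X → X} {D : Set X} (l : ℂ)

lemma integrand_cont (x : X) (φ : ℝ → ℂ) (hφ : Continuous φ) {a b : ℝ} (ha : 0 ≤ a) :
    ContinuousOn (fun s => φ s • S.T s x) (Set.Icc a b) :=
  hφ.continuousOn.smul (T_cont S x ha)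

lemma integrand_ii (x : X) (φ : ℝ → ℂ) (hφ : Continuous φ) {t : ℝ} (ht : 0 ≤ t) :
    IntervalIntegrable (fun s => φ s • S.T s x) volume 0 t := by
  apply ContinuousOn.intervalIntegrable
  rw [Set.uIcc_of_le ht]
  exact integrand_cont S x φ hφ le_rfl

lemma exp_cont (t : ℝ) : Continuous fun s : ℝ => Complex.exp (l * (t - s)) := by
  fun_prop

lemma Bop_integrable (x : X) {t : ℝ} (ht : 0 ≤ t) :
    IntervalIntegrable (fun s => Complex.exp (l * (t - s)) • S.T s x) volume 0 t :=
  integrand_ii S x _ (exp_cont l t) ht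

lemma Bop_add {t : ℝ} (ht : 0 ≤ t) (x y : X) :
    Bop S l t (x + y) = Bop S l t x + Bop S l t y := by
  unfold Bop
  rw [← intervalIntegral.integral_add (Bop_integrable S l x ht) (Bop_integrable S l y ht)]
  congr 1; ext s; rw [map_add, smul_add]

lemma Bop_smul (t : ℝ) (c : ℂ) (x : X) : Bop S l t (c • x) = c • Bop S l t x := by
  unfold Bop
  rw [← intervalIntegral.integral_smul]
  congr 1; ext s; rw [(S.T s).map_smul, smul_comm]

lemma Bop_real_smul (t : ℝ) (c : ℝ) (x : X) : Bop S l t (c • x) = c • Bop S l t x := by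
  rw [← Complex.coe_smul, Bop_smul, Complex.coe_smul]

lemma Bop_sub {t : ℝ} (ht : 0 ≤ t) (x y : X) :
    Bop S l t (x - y) = Bop S l t x - Bop S l t y := by
  unfold Bop
  rw [← intervalIntegral.integral_sub (Bop_integrable S l x ht) (Bop_integrable S l y ht)]
  congr 1; ext s; rw [map_sub, smul_sub]

lemma Bop_norm_le (x : X) {t t₀ M : ℝ} (ht : 0 ≤ t) (htt : t ≤ t₀) (hM1 : 1 ≤ M)
    (hM : ∀ s ∈ Set.Icc (0:ℝ) t₀, ‖S.T s‖ ≤ M) :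
    ‖Bop S l t x‖ ≤ Real.exp (‖l‖ * t₀) * M * t₀ * ‖x‖ := by
  have ht₀ : 0 ≤ t₀ := le_trans ht htt
  have key : ∀ s ∈ Set.uIoc (0:ℝ) t,
      ‖Complex.exp (l * (t - s)) • S.T s x‖ ≤ Real.exp (‖l‖ * t₀) * (M * ‖x‖) := by
    intro s hs
    rw [Set.uIoc_of_le ht] at hs
    rw [norm_smul]
    have h1 : ‖Complex.exp (l * (t - s))‖ ≤ Real.exp (‖l‖ * t₀) := by
      rw [Complex.norm_exp]
      apply Real.exp_le_exp.2
      have e1 : (l * ((t:ℂ) - (s:ℂ))).re ≤ ‖l * ((t:ℂ) - (s:ℂ))‖ := Complex.re_le_norm _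
      have e2 : ‖l * ((t:ℂ) - (s:ℂ))‖ = ‖l‖ * ‖(t:ℂ) - (s:ℂ)‖ := by rw [norm_mul]
      have e3 : ‖(t:ℂ) - (s:ℂ)‖ ≤ t₀ := by
        rw [← Complex.ofReal_sub, Complex.norm_real, Real.norm_eq_abs,
          abs_of_nonneg (by linarith [hs.1.le, hs.2] : (0:ℝ) ≤ t - s)]
        linarith [hs.1.le]
      have := mul_le_mul_of_nonneg_left e3 (norm_nonneg l)
      push_cast at e1 e2 ⊢
      linarith
    have h2 : ‖S.T s x‖ ≤ M * ‖x‖ :=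
      le_trans ((S.T s).le_opNorm x)
        (mul_le_mul_of_nonneg_right (hM s ⟨hs.1.le, le_trans hs.2 htt⟩) (norm_nonneg x))
    exact mul_le_mul h1 h2 (norm_nonneg _) (Real.exp_nonneg _)
  have hb := intervalIntegral.norm_integral_le_of_norm_le_const key
  rw [sub_zero, abs_of_nonneg ht] at hb
  have hstep : Real.exp (‖l‖ * t₀) * (M * ‖x‖) * t ≤ Real.exp (‖l‖ * t₀) * M * t₀ * ‖x‖ := by
    have e := Real.exp_nonneg (‖l‖ * t₀)
    have hx := norm_nonneg x
    have hM0 : (0:ℝ) ≤ M := by linarith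
    have h4 : Real.exp (‖l‖ * t₀) * (M * ‖x‖) * t = Real.exp (‖l‖*t₀) * M * ‖x‖ * t := by ring
    have h5 : Real.exp (‖l‖ * t₀) * M * t₀ * ‖x‖ = Real.exp (‖l‖*t₀) * M * ‖x‖ * t₀ := by ring
    rw [h4, h5]
    exact mul_le_mul_of_nonneg_left htt (mul_nonneg (mul_nonneg e hM0) hx)
  exact le_trans hb hstep

lemma T_hasDeriv (hgen : S.IsGenerator A D) {x : X} (hx : x ∈ D) {s : ℝ} (hs : 0 ≤ s) :
    HasDerivWithinAt (fun u => S.T u x) (S.T s (A x)) (Set.Ioi s) s := by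
  rw [hasDerivWithinAt_iff_tendsto_slope, Set.diff_singleton_eq_self Set.notMem_Ioi_self]
  have h1 : Tendsto (fun u : ℝ => u - s) (𝓝[Set.Ioi s] s) (𝓝[>] (0:ℝ)) := by
    apply tendsto_nhdsWithin_of_tendsto_nhds_of_eventually_within
    · have hc : Continuous (fun u : ℝ => u - s) := continuous_id.sub continuous_const
      have := hc.tendsto s
      simpa using this.mono_left (nhdsWithin_le_nhds (s := Set.Ioi s))
    · exact eventually_nhdsWithin_of_forall (fun u hu => by simp [Set.mem_Ioi] at hu ⊢; linarith)
  have h2 := (hgen.2 x hx).comp h1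
  have h3 := ((S.T s).continuous.tendsto (A x)).comp h2
  apply h3.congr'
  filter_upwards [self_mem_nhdsWithin] with u hu
  have hus : s < u := hu
  have hT : S.T u x = S.T s (S.T (u - s) x) := by
    have h := S.map_add' s (u - s) hs (by linarith)
    rw [show s + (u - s) = u by ring] at h
    rw [h]; rfl
  simp only [Function.comp_apply]
  rw [slope_def_module, hT, ← map_sub, ← (S.T s).map_smul_of_tower]

lemma Bop_resolvent (hgen : S.IsGenerator A D) {x : X} (hx : x ∈ D) {t : ℝ} (ht : 0 ≤ t) :
    Bop S l t (l • x - A x) = Complex.exp (l * t) • x - S.T t x := by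
  set f : ℝ → X := fun s => Complex.exp (l * (t - s)) • S.T s x with hf
  set g : ℝ → X := fun s =>
    Complex.exp (l * (t - s)) • S.T s (A x) + (-(l * Complex.exp (l * (t - s)))) • S.T s x with hg
  have hderiv : ∀ s ∈ Set.Ioo 0 t, HasDerivWithinAt f (g s) (Set.Ioi s) s := by
    intro s hs
    have hc : HasDerivAt (fun u : ℝ => Complex.exp (l * (t - u)))
        (-(l * Complex.exp (l * (t - s)))) s := by
      have hinner : HasDerivAt (fun u : ℝ => ((t - u : ℝ) : ℂ)) (-1 : ℂ) s := by
        have : HasDerivAt (fun u : ℝ => t - u) (-1 : ℝ) s := by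
          simpa using ((hasDerivAt_id s).const_sub t)
        simpa using this.ofReal_comp
      have hmul : HasDerivAt (fun u : ℝ => l * ((t - u : ℝ) : ℂ)) (l * (-1)) s :=
        hinner.const_mul l
      have := hmul.cexp
      simpa [mul_comm] using this
    have hT := T_hasDeriv S hgen hx hs.1.le (s := s)
    have := (hc.hasDerivWithinAt (s := Set.Ioi s)).smul hT
    convert this using 1
    funext u
    rfl
  have hcont : ContinuousOn f (Set.Icc 0 t) := integrand_cont S x _ (exp_cont l t) le_rfl
  have hint : IntervalIntegrable g volume 0 t := by
    apply IntervalIntegrable.add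
    · exact integrand_ii S (A x) _ (exp_cont l t) ht
    · exact integrand_ii S x _ (by fun_prop) ht
  have hftc := intervalIntegral.integral_eq_sub_of_hasDeriv_right_of_le ht hcont hderiv hint
  have hft : f t = S.T t x := by simp [hf]
  have hf0 : f 0 = Complex.exp (l * t) • x := by
    simp [hf, S.map_zero']
  have hBg : Bop S l t (l • x - A x) = ∫ s in (0:ℝ)..t, (-(g s)) := by
    unfold Bop
    congr 1; ext s
    rw [map_sub, (S.T s).map_smul]
    simp only [hg]
    module
  rw [hBg, intervalIntegral.integral_neg, hftc, hft, hf0, neg_sub]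

lemma T_Bop {t u : ℝ} (ht : 0 ≤ t) (hu : 0 ≤ u) (x : X) :
    S.T u (Bop S l t x) = Bop S l t (S.T u x) := by
  unfold Bop
  rw [← (S.T u).intervalIntegral_comp_comm (Bop_integrable S l x ht)]
  refine intervalIntegral.integral_congr ?_
  intro s hs
  rw [Set.uIcc_of_le ht] at hs
  simp only
  rw [(S.T u).map_smul, T_swap S hu hs.1]

lemma T_mem (hgen : S.IsGenerator A D) {x : X} (hx : x ∈ D) {u : ℝ} (hu : 0 ≤ u) :
    S.T u x ∈ D ∧ A (S.T u x) = S.T u (A x) := by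
  apply gen_spec S hgen
  have h3 := ((S.T u).continuous.tendsto (A x)).comp (hgen.2 x hx)
  apply h3.congr'
  filter_upwards [self_mem_nhdsWithin] with h hh
  simp only [Function.comp_apply]
  rw [(S.T u).map_smul_of_tower, map_sub, T_swap S hu hh.le]

lemma Bop_tendsto {ι : Type*} {f : Filter ι} {q : ι → X} {y : X} {t t₀ : ℝ}
    (ht : 0 ≤ t) (htt : t ≤ t₀) (hq : Tendsto q f (𝓝 y)) :
    Tendsto (fun i => Bop S l t (q i)) f (𝓝 (Bop S l t y)) := by
  obtain ⟨M, hM1, hM⟩ := exists_bound S t₀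
  rw [tendsto_iff_norm_sub_tendsto_zero] at hq ⊢
  apply squeeze_zero (fun i => norm_nonneg _) (g := fun i =>
    Real.exp (‖l‖ * t₀) * M * t₀ * ‖q i - y‖)
  · intro i
    calc ‖Bop S l t (q i) - Bop S l t y‖ = ‖Bop S l t (q i - y)‖ := by
          rw [Bop_sub S l ht]
      _ ≤ Real.exp (‖l‖ * t₀) * M * t₀ * ‖q i - y‖ :=
          Bop_norm_le S l _ ht htt hM1 hM
  · simpa using hq.const_mul (Real.exp (‖l‖ * t₀) * M * t₀)

lemma Bop_mem (hgen : S.IsGenerator A D) {x : X} (hx : x ∈ D) {t : ℝ} (ht : 0 ≤ t) :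
    Bop S l t x ∈ D ∧ A (Bop S l t x) = Bop S l t (A x) := by
  apply gen_spec S hgen
  have h3 := Bop_tendsto S l ht le_rfl (hgen.2 x hx)
  apply h3.congr'
  filter_upwards [self_mem_nhdsWithin] with h hh
  rw [Bop_real_smul, Bop_sub S l ht, ← T_Bop S l ht hh.le]

lemma Bop_contOn (x : X) {t₀ : ℝ} (ht₀ : 0 ≤ t₀) :
    ContinuousOn (fun s => Bop S l s x) (Set.Icc 0 t₀) := by
  have hint : IntegrableOn (fun u : ℝ => Complex.exp (-(l * u)) • S.T u x)
      (Set.uIcc (0:ℝ) t₀) volume := by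
    rw [Set.uIcc_of_le ht₀]
    exact (integrand_cont S x _ (by fun_prop) le_rfl).integrableOn_compact isCompact_Icc
  have hp := intervalIntegral.continuousOn_primitive_interval hint
  rw [Set.uIcc_of_le ht₀] at hp
  have heq : ∀ s ∈ Set.Icc (0:ℝ) t₀, Bop S l s x
      = Complex.exp (l * s) • ∫ u in (0:ℝ)..s, Complex.exp (-(l * u)) • S.T u x := by
    intro s hs
    unfold Bop
    rw [← intervalIntegral.integral_smul]
    refine intervalIntegral.integral_congr fun u hu => ?_
    show Complex.exp (l * (s - u)) • S.T u x
      = Complex.exp (l * s) • Complex.exp (-(l * u)) • S.T u x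
    rw [smul_smul, ← Complex.exp_add]
    congr 2
    push_cast
    ring
  refine ContinuousOn.congr ?_ heq
  exact (Complex.continuous_exp.comp (by fun_prop)).continuousOn.smul hp

lemma Cop_integrable (x : X) {t₀ : ℝ} (ht₀ : 0 ≤ t₀) :
    IntervalIntegrable (fun s => Complex.exp (-(l * s)) • Bop S l s x) volume 0 t₀ := by
  apply ContinuousOn.intervalIntegrable
  rw [Set.uIcc_of_le ht₀]
  exact (Continuous.continuousOn (by fun_prop)).smul (Bop_contOn S l x ht₀)

lemma exp_norm_le {z : ℂ} {r : ℝ} (h : ‖z‖ ≤ r) : ‖Complex.exp z‖ ≤ Real.exp r := by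
  rw [Complex.norm_exp]
  exact Real.exp_le_exp.2 (le_trans (Complex.re_le_norm z) h)

lemma T_Cop {u t₀ : ℝ} (hu : 0 ≤ u) (ht₀ : 0 ≤ t₀) (x : X) :
    S.T u (Cop S l t₀ x) = Cop S l t₀ (S.T u x) := by
  unfold Cop
  rw [(S.T u).map_smul, ← (S.T u).intervalIntegral_comp_comm (Cop_integrable S l x ht₀)]
  congr 1
  refine intervalIntegral.integral_congr fun s hs => ?_
  rw [Set.uIcc_of_le ht₀] at hs
  show S.T u (Complex.exp (-(l * s)) • Bop S l s x)
      = Complex.exp (-(l * s)) • Bop S l s (S.T u x)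
  rw [(S.T u).map_smul, T_Bop S l hs.1 hu]

lemma Cop_sub {t₀ : ℝ} (ht₀ : 0 ≤ t₀) (x y : X) :
    Cop S l t₀ (x - y) = Cop S l t₀ x - Cop S l t₀ y := by
  unfold Cop
  rw [← smul_sub, ← intervalIntegral.integral_sub (Cop_integrable S l x ht₀)
    (Cop_integrable S l y ht₀)]
  congr 1
  refine intervalIntegral.integral_congr fun s hs => ?_
  rw [Set.uIcc_of_le ht₀] at hs
  show Complex.exp (-(l * s)) • Bop S l s (x - y)
      = Complex.exp (-(l * s)) • Bop S l s x - Complex.exp (-(l * s)) • Bop S l s y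
  rw [Bop_sub S l hs.1, smul_sub]

lemma Cop_real_smul (t₀ : ℝ) (c : ℝ) (x : X) :
    Cop S l t₀ (c • x) = c • Cop S l t₀ x := by
  unfold Cop
  have h : ∀ s : ℝ, Complex.exp (-(l * s)) • Bop S l s (c • x)
      = c • (Complex.exp (-(l * s)) • Bop S l s x) := by
    intro s
    rw [Bop_real_smul, smul_comm]
  simp only [h]
  rw [intervalIntegral.integral_smul, smul_comm]

lemma Cop_norm_le (x : X) {t₀ M : ℝ} (ht₀ : 0 < t₀) (hM1 : 1 ≤ M)
    (hM : ∀ s ∈ Set.Icc (0:ℝ) t₀, ‖S.T s‖ ≤ M) :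
    ‖Cop S l t₀ x‖ ≤ Real.exp (‖l‖ * t₀) * (Real.exp (‖l‖ * t₀) * M * t₀) * ‖x‖ := by
  have key : ∀ s ∈ Set.uIoc (0:ℝ) t₀, ‖Complex.exp (-(l * s)) • Bop S l s x‖
      ≤ Real.exp (‖l‖ * t₀) * (Real.exp (‖l‖ * t₀) * M * t₀ * ‖x‖) := by
    intro s hs
    rw [Set.uIoc_of_le ht₀.le] at hs
    rw [norm_smul]
    refine mul_le_mul (exp_norm_le ?_) (Bop_norm_le S l x hs.1.le hs.2 hM1 hM)
      (norm_nonneg _) (Real.exp_nonneg _)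
    rw [norm_neg, norm_mul, Complex.norm_real, Real.norm_eq_abs, abs_of_nonneg hs.1.le]
    exact mul_le_mul_of_nonneg_left hs.2 (norm_nonneg l)
  have hb := intervalIntegral.norm_integral_le_of_norm_le_const key
  rw [sub_zero, abs_of_nonneg ht₀.le] at hb
  unfold Cop
  rw [norm_smul]
  have hnorm : ‖(t₀:ℂ)⁻¹‖ = t₀⁻¹ := by
    rw [norm_inv, Complex.norm_real, Real.norm_eq_abs, abs_of_nonneg ht₀.le]
  rw [hnorm]
  calc t₀⁻¹ * ‖∫ s in (0:ℝ)..t₀, Complex.exp (-(l * s)) • Bop S l s x‖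
      ≤ t₀⁻¹ * (Real.exp (‖l‖ * t₀) * (Real.exp (‖l‖ * t₀) * M * t₀ * ‖x‖) * t₀) :=
        mul_le_mul_of_nonneg_left hb (inv_nonneg.2 ht₀.le)
    _ = Real.exp (‖l‖ * t₀) * (Real.exp (‖l‖ * t₀) * M * t₀) * ‖x‖ := by
        field_simp

lemma Cop_tendsto {ι : Type*} {f : Filter ι} {q : ι → X} {y : X} {t₀ : ℝ}
    (ht₀ : 0 < t₀) (hq : Tendsto q f (𝓝 y)) :
    Tendsto (fun i => Cop S l t₀ (q i)) f (𝓝 (Cop S l t₀ y)) := by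
  obtain ⟨M, hM1, hM⟩ := exists_bound S t₀
  rw [tendsto_iff_norm_sub_tendsto_zero] at hq ⊢
  apply squeeze_zero (fun i => norm_nonneg _) (g := fun i =>
    Real.exp (‖l‖ * t₀) * (Real.exp (‖l‖ * t₀) * M * t₀) * ‖q i - y‖)
  · intro i
    rw [← Cop_sub S l ht₀.le]
    exact Cop_norm_le S l _ ht₀ hM1 hM
  · simpa using hq.const_mul (Real.exp (‖l‖ * t₀) * (Real.exp (‖l‖ * t₀) * M * t₀))

lemma Cop_mem (hgen : S.IsGenerator A D) {x : X} (hx : x ∈ D) {t₀ : ℝ} (ht₀ : 0 < t₀) :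
    Cop S l t₀ x ∈ D ∧ A (Cop S l t₀ x) = Cop S l t₀ (A x) := by
  apply gen_spec S hgen
  have h3 := Cop_tendsto S l ht₀ (hgen.2 x hx)
  apply h3.congr'
  filter_upwards [self_mem_nhdsWithin] with h hh
  rw [Cop_real_smul, Cop_sub S l ht₀.le, ← T_Cop S l hh.le ht₀.le]

lemma main_id (hgen : S.IsGenerator A D) {x : X} (hx : x ∈ D) {t₀ : ℝ} (ht₀ : 0 < t₀) :
    Cop S l t₀ (l • x - A x)
      + ((t₀ : ℂ)⁻¹ * Complex.exp (-(l * t₀))) • Bop S l t₀ x = x := by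
  have hG : IntervalIntegrable (fun s : ℝ => Complex.exp (-(l * s)) • S.T s x) volume 0 t₀ :=
    integrand_ii S x _ (by fun_prop) ht₀.le
  set G : X := ∫ s in (0:ℝ)..t₀, Complex.exp (-(l * s)) • S.T s x with hGdef
  have h1 : Cop S l t₀ (l • x - A x) = (t₀ : ℂ)⁻¹ • ((t₀ : ℝ) • x - G) := by
    unfold Cop
    congr 1
    have hcongr : ∀ s ∈ Set.uIcc (0:ℝ) t₀,
        Complex.exp (-(l * s)) • Bop S l s (l • x - A x)
          = x - Complex.exp (-(l * s)) • S.T s x := by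
      intro s hs
      rw [Set.uIcc_of_le ht₀.le] at hs
      rw [Bop_resolvent S l hgen hx hs.1, smul_sub, smul_smul, ← Complex.exp_add]
      have : -(l * (s:ℂ)) + l * (s:ℂ) = 0 := by ring
      rw [this, Complex.exp_zero, one_smul]
    rw [intervalIntegral.integral_congr hcongr,
      intervalIntegral.integral_sub intervalIntegrable_const hG,
      intervalIntegral.integral_const, sub_zero]
  have h2 : Complex.exp (-(l * t₀)) • Bop S l t₀ x = G := by
    unfold Bop
    rw [← intervalIntegral.integral_smul]
    refine intervalIntegral.integral_congr fun s hs => ?_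
    show Complex.exp (-(l * t₀)) • Complex.exp (l * (t₀ - s)) • S.T s x
        = Complex.exp (-(l * s)) • S.T s x
    rw [smul_smul, ← Complex.exp_add]
    congr 2
    push_cast
    ring
  rw [h1, mul_smul, h2, smul_sub, ← Complex.coe_smul, smul_smul,
    inv_mul_cancel₀ (by exact_mod_cast ht₀.ne' : (t₀:ℂ) ≠ 0), one_smul]
  abel

lemma Bop_double {a b : ℝ} (ha : 0 ≤ a) (hb : 0 ≤ b) (x : X) :
    Bop S l a (Bop S l b x)
      = ∫ u in (0:ℝ)..a, ∫ v in (0:ℝ)..b,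
          (Complex.exp (l * (a - u)) * Complex.exp (l * (b - v))) • S.T (u + v) x := by
  unfold Bop
  refine intervalIntegral.integral_congr fun u hu => ?_
  rw [Set.uIcc_of_le ha] at hu
  show Complex.exp (l * (a - u)) • S.T u (∫ v in (0:ℝ)..b, Complex.exp (l * (b - v)) • S.T v x)
      = _
  rw [← (S.T u).intervalIntegral_comp_comm (Bop_integrable S l x hb),
    ← intervalIntegral.integral_smul]
  refine intervalIntegral.integral_congr fun v hv => ?_
  rw [Set.uIcc_of_le hb] at hv
  show Complex.exp (l * (a - u)) • S.T u (Complex.exp (l * (b - v)) • S.T v x)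
      = (Complex.exp (l * (a - u)) * Complex.exp (l * (b - v))) • S.T (u + v) x
  rw [(S.T u).map_smul, smul_smul, S.map_add' u v hu.1 hv.1]
  rfl

lemma Bop_Bop_comm {t s : ℝ} (ht : 0 ≤ t) (hs : 0 ≤ s) (x : X) :
    Bop S l t (Bop S l s x) = Bop S l s (Bop S l t x) := by
  rw [Bop_double S l ht hs x, Bop_double S l hs ht x]
  set F : ℝ → ℝ → X := fun u v =>
    (Complex.exp (l * (t - u)) * Complex.exp (l * (s - v))) • S.T (u + v) x with hF
  have hcont : ContinuousOn (Function.uncurry F)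
      (Set.Icc (0:ℝ) t ×ˢ Set.Icc (0:ℝ) s) := by
    apply ContinuousOn.smul
    · exact (Continuous.continuousOn (by fun_prop))
    · refine (S.strong_cont' x).comp ?_ ?_
      · exact (continuous_fst.add continuous_snd).continuousOn
      · intro p hp
        exact add_nonneg hp.1.1 hp.2.1
  have hint : Integrable (Function.uncurry F)
      ((volume.restrict (Set.Ioc (0:ℝ) t)).prod (volume.restrict (Set.Ioc (0:ℝ) s))) := by
    rw [MeasureTheory.Measure.prod_restrict]
    refine MeasureTheory.IntegrableOn.mono_set ?_
      (Set.prod_mono Set.Ioc_subset_Icc_self Set.Ioc_subset_Icc_self)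
    exact hcont.integrableOn_compact (isCompact_Icc.prod isCompact_Icc)
  have hswap := MeasureTheory.integral_integral_swap hint
  calc (∫ u in (0:ℝ)..t, ∫ v in (0:ℝ)..s, F u v)
      = ∫ u in Set.Ioc (0:ℝ) t, ∫ v in Set.Ioc (0:ℝ) s, F u v := by
        rw [intervalIntegral.integral_of_le ht]
        refine MeasureTheory.setIntegral_congr_fun measurableSet_Ioc fun u _ => ?_
        rw [intervalIntegral.integral_of_le hs]
    _ = ∫ v in Set.Ioc (0:ℝ) s, ∫ u in Set.Ioc (0:ℝ) t, F u v := hswap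
    _ = ∫ v in (0:ℝ)..s, ∫ u in (0:ℝ)..t,
          (Complex.exp (l * (s - v)) * Complex.exp (l * (t - u))) • S.T (v + u) x := by
        rw [intervalIntegral.integral_of_le hs]
        refine MeasureTheory.setIntegral_congr_fun measurableSet_Ioc fun v _ => ?_
        rw [intervalIntegral.integral_of_le ht]
        refine MeasureTheory.setIntegral_congr_fun measurableSet_Ioc fun u _ => ?_
        rw [hF]
        simp only
        rw [mul_comm, add_comm]

noncomputable def BopL (S : C0Semigroup X) (l : ℂ) {t : ℝ} (ht : 0 ≤ t) : X →L[ℂ] X :=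
  LinearMap.mkContinuousOfExistsBound
    { toFun := Bop S l t
      map_add' := Bop_add S l ht
      map_smul' := Bop_smul S l t }
    (by
      obtain ⟨M, hM1, hM⟩ := exists_bound S t
      exact ⟨Real.exp (‖l‖ * t) * M * t, fun x => Bop_norm_le S l x ht le_rfl hM1 hM⟩)

lemma BopL_apply {t : ℝ} (ht : 0 ≤ t) (x : X) : BopL S l ht x = Bop S l t x := rfl

lemma Cop_csmul (t₀ : ℝ) (c : ℂ) (x : X) :
    Cop S l t₀ (c • x) = c • Cop S l t₀ x := by
  unfold Cop
  have h : ∀ s : ℝ, Complex.exp (-(l * s)) • Bop S l s (c • x)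
      = c • (Complex.exp (-(l * s)) • Bop S l s x) := by
    intro s
    rw [Bop_smul, smul_comm]
  simp only [h]
  rw [intervalIntegral.integral_smul, smul_comm]

lemma Bop_Cop_comm {t₀ : ℝ} (ht₀ : 0 ≤ t₀) (x : X) :
    Bop S l t₀ (Cop S l t₀ x) = Cop S l t₀ (Bop S l t₀ x) := by
  have h1 : Bop S l t₀ (Cop S l t₀ x)
      = (t₀ : ℂ)⁻¹ • ∫ s in (0:ℝ)..t₀,
          Complex.exp (-(l * s)) • Bop S l t₀ (Bop S l s x) := by
    rw [← BopL_apply S l ht₀]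
    unfold Cop
    rw [_root_.map_smul, ← (BopL S l ht₀).intervalIntegral_comp_comm (Cop_integrable S l x ht₀)]
    congr 1
    refine intervalIntegral.integral_congr fun s hs => ?_
    show BopL S l ht₀ (Complex.exp (-(l * s)) • Bop S l s x)
        = Complex.exp (-(l * s)) • Bop S l t₀ (Bop S l s x)
    rw [_root_.map_smul, BopL_apply]
  rw [h1]
  unfold Cop
  congr 1
  refine intervalIntegral.integral_congr fun s hs => ?_
  rw [Set.uIcc_of_le ht₀] at hs
  show Complex.exp (-(l * s)) • Bop S l t₀ (Bop S l s x)
      = Complex.exp (-(l * s)) • Bop S l s (Bop S l t₀ x)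
  rw [Bop_Bop_comm S l ht₀ hs.1]

end core

/-- Lemma 3.1: with `C = (1/t₀)∫₀^{t₀} e^{−λs} B(λ,s) ds` and `D = (1/t₀)e^{−λt₀} I`,
one has `C (λI − A) x + D B(λ,t₀) x = x` for every `x ∈ D(A)`, and the operators
`λI − A`, `B(λ,t₀)`, `C`, `D` mutually commute on `D(A)`. -/
theorem stmt13 {X : Type*} [NormedAddCommGroup X] [NormedSpace ℂ X] [CompleteSpace X]
    (S : C0Semigroup X) (A : X → X) (D : Set X) (hgen : S.IsGenerator A D)
    (l : ℂ) (t₀ : ℝ) (ht₀ : 0 < t₀) (x : X) (hx : x ∈ D) :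
    -- the identity  C (λI − A) x + D B(λ,t₀) x = x
    Cop S l t₀ (l • x - A x)
        + ((t₀ : ℂ)⁻¹ * Complex.exp (-(l * t₀))) • Bop S l t₀ x = x ∧
    -- B(λ,t₀) and C map D(A) into itself
    Bop S l t₀ x ∈ D ∧ Cop S l t₀ x ∈ D ∧
    -- B(λ,t₀) commutes with λI − A on D(A)
    Bop S l t₀ (l • x - A x) = l • Bop S l t₀ x - A (Bop S l t₀ x) ∧
    -- C commutes with λI − A on D(A)
    Cop S l t₀ (l • x - A x) = l • Cop S l t₀ x - A (Cop S l t₀ x) ∧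
    -- B(λ,t₀) commutes with C
    Bop S l t₀ (Cop S l t₀ x) = Cop S l t₀ (Bop S l t₀ x) := by
  
  obtain ⟨hBmem, hBA⟩ := Bop_mem S l hgen hx ht₀.le
  obtain ⟨hCmem, hCA⟩ := Cop_mem S l hgen hx ht₀
  refine ⟨main_id S l hgen hx ht₀, hBmem, hCmem, ?_, ?_, Bop_Cop_comm S l ht₀.le x⟩
  · rw [Bop_sub S l ht₀.le, Bop_smul, hBA]
  · rw [Cop_sub S l ht₀.le, Cop_csmul, hCA]
end

section
/- Let (T(t))_{t≥0} be a strongly continuous semigroup on a Banach space X with generator A, let λ ∈ ℂ, t₀ > 0, and n a positive integer. If R((e^{λt₀}·I − T(t₀))ⁿ) is closed in X and the Bochner-integral operator B(λ,t₀) has N(B(λ,t₀)ⁿ) ⊆ R((λ·I − A)ⁿ), then R((λ·I − A)ⁿ) is closed. -/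
open Filter Topology MeasureTheory intervalIntegral

namespace C0Semigroup

variable {X : Type*} [NormedAddCommGroup X] [NormedSpace ℂ X]

set_option linter.unusedSectionVars false

variable [CompleteSpace X]
variable (S : C0Semigroup X)

lemma t_zero (x : X) : S.T 0 x = x := by rw [S.map_zero']; rfl

lemma t_add (s t : ℝ) (hs : 0 ≤ s) (ht : 0 ≤ t) (x : X) :
    S.T (s + t) x = S.T s (S.T t x) := by rw [S.map_add' s t hs ht]; rfl

lemma t_comm (s t : ℝ) (hs : 0 ≤ s) (ht : 0 ≤ t) (x : X) :
    S.T s (S.T t x) = S.T t (S.T s x) := by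
  rw [← S.t_add s t hs ht, add_comm, S.t_add t s ht hs]

noncomputable def core (c : ℂ) (t₀ : ℝ) (x : X) : ℝ → X :=
  fun s => Complex.exp (c * (t₀ - s)) • S.T s x

noncomputable def Bop' (c : ℂ) (t₀ : ℝ) (x : X) : X :=
  ∫ s in (0:ℝ)..t₀, Complex.exp (c * (t₀ - s)) • S.T s x

lemma Bop'_eq (c : ℂ) (t₀ : ℝ) (x : X) :
    S.Bop' c t₀ x = ∫ s in (0:ℝ)..t₀, S.core c t₀ x s := rfl

lemma core_contOn (c : ℂ) (t₀ : ℝ) (x : X) : ContinuousOn (S.core c t₀ x) (Set.Ici 0) := by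
  apply ContinuousOn.smul _ (S.strong_cont' x)
  exact (Complex.continuous_exp.comp (by fun_prop)).continuousOn

lemma core_integrable (c : ℂ) (t₀ : ℝ) (x : X) {a b : ℝ} (ha : 0 ≤ a) (hb : 0 ≤ b) :
    IntervalIntegrable (S.core c t₀ x) volume a b := by
  apply ContinuousOn.intervalIntegrable
  apply (S.core_contOn c t₀ x).mono
  intro y hy
  exact le_trans (le_min ha hb) hy.1

lemma exists_T_bound (b : ℝ) : ∃ M : ℝ, 0 ≤ M ∧ ∀ s ∈ Set.Icc (0:ℝ) b, ‖S.T s‖ ≤ M := by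
  have h : ∀ x : X, ∃ C, ∀ i : Set.Icc (0:ℝ) b, ‖S.T i x‖ ≤ C := by
    intro x
    obtain ⟨C, hC⟩ := (isCompact_Icc (a := (0:ℝ)) (b := b)).exists_bound_of_continuousOn
      ((S.strong_cont' x).mono (Set.Icc_subset_Ici_self))
    exact ⟨C, fun i => hC i i.2⟩
  obtain ⟨C', hC'⟩ := banach_steinhaus h
  exact ⟨max C' 0, le_max_right _ _, fun s hs => le_max_of_le_left (hC' ⟨s, hs⟩)⟩

lemma core_norm_le (c : ℂ) (t₀ : ℝ) (ht₀ : 0 ≤ t₀) (x : X) {M : ℝ}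
    (hM : ∀ s ∈ Set.Icc (0:ℝ) t₀, ‖S.T s‖ ≤ M) {s : ℝ} (hs : s ∈ Set.Icc (0:ℝ) t₀) :
    ‖S.core c t₀ x s‖ ≤ Real.exp (‖c‖ * t₀) * (M * ‖x‖) := by
  rw [core, norm_smul]
  have h1 : ‖Complex.exp (c * ((t₀:ℂ) - (s:ℂ)))‖ ≤ Real.exp (‖c‖ * t₀) := by
    rw [Complex.norm_exp]
    apply Real.exp_le_exp.2
    calc (c * ((t₀:ℂ) - (s:ℂ))).re ≤ ‖c * ((t₀:ℂ) - (s:ℂ))‖ := Complex.re_le_norm _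
      _ = ‖c‖ * |t₀ - s| := by
          rw [norm_mul, ← Complex.ofReal_sub, Complex.norm_real, Real.norm_eq_abs]
      _ ≤ ‖c‖ * t₀ := by
          apply mul_le_mul_of_nonneg_left _ (norm_nonneg c)
          rw [abs_of_nonneg (by linarith [hs.2])]
          linarith [hs.1]
  have h2 : ‖S.T s x‖ ≤ M * ‖x‖ :=
    le_trans ((S.T s).le_opNorm x) (mul_le_mul_of_nonneg_right (hM s hs) (norm_nonneg x))
  exact mul_le_mul h1 h2 (norm_nonneg _) (Real.exp_nonneg _)

lemma Bop'_add (c : ℂ) (t₀ : ℝ) (ht₀ : 0 ≤ t₀) (x y : X) :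
    S.Bop' c t₀ (x + y) = S.Bop' c t₀ x + S.Bop' c t₀ y := by
  simp only [Bop'_eq]
  rw [← intervalIntegral.integral_add (S.core_integrable c t₀ x le_rfl ht₀)
    (S.core_integrable c t₀ y le_rfl ht₀)]
  apply intervalIntegral.integral_congr
  intro s _
  simp [core, smul_add]

lemma Bop'_smul (c : ℂ) (t₀ : ℝ) (a : ℂ) (x : X) :
    S.Bop' c t₀ (a • x) = a • S.Bop' c t₀ x := by
  simp only [Bop'_eq]
  rw [← intervalIntegral.integral_smul]
  apply intervalIntegral.integral_congr
  intro s _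
  simp only [core, (S.T s).map_smul]
  rw [smul_comm]

noncomputable def BopCLM (c : ℂ) (t₀ : ℝ) (ht₀ : 0 ≤ t₀) : X →L[ℂ] X := by
  classical
  refine LinearMap.mkContinuous
    { toFun := S.Bop' c t₀
      map_add' := S.Bop'_add c t₀ ht₀
      map_smul' := fun a x => S.Bop'_smul c t₀ a x }
    (Real.exp (‖c‖ * t₀) * ((S.exists_T_bound t₀).choose * 1) * t₀) ?_
  intro x
  obtain ⟨hM0, hM⟩ := (S.exists_T_bound t₀).choose_spec
  set M := (S.exists_T_bound t₀).choose
  have hb : ∀ s ∈ Set.uIoc (0:ℝ) t₀, ‖S.core c t₀ x s‖ ≤ Real.exp (‖c‖ * t₀) * (M * ‖x‖) := by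
    intro s hs
    apply S.core_norm_le c t₀ ht₀ x hM
    rw [Set.uIoc_of_le ht₀] at hs
    exact ⟨le_of_lt hs.1, hs.2⟩
  calc ‖S.Bop' c t₀ x‖ ≤ Real.exp (‖c‖ * t₀) * (M * ‖x‖) * |t₀ - 0| :=
        intervalIntegral.norm_integral_le_of_norm_le_const hb
    _ = Real.exp (‖c‖ * t₀) * (M * 1) * t₀ * ‖x‖ := by
        rw [sub_zero, abs_of_nonneg ht₀]; ring
    _ ≤ Real.exp (‖c‖ * t₀) * (M * 1) * t₀ * ‖x‖ := le_rfl

lemma BopCLM_apply (c : ℂ) (t₀ : ℝ) (ht₀ : 0 ≤ t₀) (x : X) :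
    S.BopCLM c t₀ ht₀ x = S.Bop' c t₀ x := rfl

noncomputable def CopCLM (c : ℂ) (t₀ : ℝ) : X →L[ℂ] X :=
  Complex.exp (c * t₀) • (1 : X →L[ℂ] X) - S.T t₀

lemma CopCLM_apply (c : ℂ) (t₀ : ℝ) (x : X) :
    S.CopCLM c t₀ x = Complex.exp (c * t₀) • x - S.T t₀ x := rfl

/-- Operators commuting with the semigroup. -/
def SComm (L : X →L[ℂ] X) : Prop := ∀ t : ℝ, 0 ≤ t → ∀ x : X, L (S.T t x) = S.T t (L x)

lemma sComm_T (t : ℝ) (ht : 0 ≤ t) : S.SComm (S.T t) := fun s hs x => S.t_comm t s ht hs x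

lemma sComm_one : S.SComm 1 := fun _ _ _ => rfl

lemma SComm.smul {L : X →L[ℂ] X} (h : S.SComm L) (a : ℂ) : S.SComm (a • L) := by
  intro t ht x
  simp only [ContinuousLinearMap.smul_apply]
  rw [h t ht x, (S.T t).map_smul]

lemma SComm.add {L M : X →L[ℂ] X} (hL : S.SComm L) (hM : S.SComm M) : S.SComm (L + M) := by
  intro t ht x
  simp only [ContinuousLinearMap.add_apply, hL t ht x, hM t ht x, map_add]

lemma SComm.sub {L M : X →L[ℂ] X} (hL : S.SComm L) (hM : S.SComm M) : S.SComm (L - M) := by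
  intro t ht x
  simp only [ContinuousLinearMap.sub_apply, hL t ht x, hM t ht x, map_sub]

lemma SComm.mul {L M : X →L[ℂ] X} (hL : S.SComm L) (hM : S.SComm M) : S.SComm (L * M) := by
  intro t ht x
  simp only [ContinuousLinearMap.mul_apply, hM t ht x]
  exact hL t ht (M x)

lemma sComm_Cop (c : ℂ) (t₀ : ℝ) (ht₀ : 0 ≤ t₀) : S.SComm (S.CopCLM c t₀) :=
  ((S.sComm_one.smul S _).sub S (S.sComm_T t₀ ht₀))

lemma map_Bop' (L : X →L[ℂ] X) (c : ℂ) (t₀ : ℝ) (ht₀ : 0 ≤ t₀) (x : X) :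
    L (S.Bop' c t₀ x) = ∫ s in (0:ℝ)..t₀, Complex.exp (c * (t₀ - s)) • L (S.T s x) := by
  rw [Bop'_eq, ← L.intervalIntegral_comp_comm (S.core_integrable c t₀ x le_rfl ht₀)]
  apply intervalIntegral.integral_congr
  intro s _
  exact _root_.map_smul L _ _

lemma SComm.bop' {L : X →L[ℂ] X} (hL : S.SComm L) (c : ℂ) (t₀ : ℝ) (ht₀ : 0 ≤ t₀) (x : X) :
    L (S.Bop' c t₀ x) = S.Bop' c t₀ (L x) := by
  rw [S.map_Bop' L c t₀ ht₀ x, Bop'_eq]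
  apply intervalIntegral.integral_congr
  intro s hs
  have hs0 : 0 ≤ s := le_trans (le_min le_rfl ht₀) hs.1
  simp only [core]
  rw [hL s hs0 x]

lemma sComm_Bop (c : ℂ) (t₀ : ℝ) (ht₀ : 0 ≤ t₀) : S.SComm (S.BopCLM c t₀ ht₀) := by
  intro t ht x
  rw [BopCLM_apply, BopCLM_apply, ← (S.sComm_T t ht).bop' S c t₀ ht₀ x]

lemma avg_tendsto {f : ℝ → X} (hf : ContinuousOn f (Set.Ici 0)) {a : ℝ} (ha : 0 ≤ a) :
    Tendsto (fun h : ℝ => h⁻¹ • ∫ u in a..(a+h), f u) (𝓝[>] 0) (𝓝 (f a)) := by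
  rw [Metric.tendsto_nhdsWithin_nhds]
  intro ε hε
  have hca : ContinuousWithinAt f (Set.Ici 0) a := hf a ha
  rw [Metric.continuousWithinAt_iff] at hca
  obtain ⟨δ, hδ, hδ'⟩ := hca (ε/2) (by linarith)
  refine ⟨δ, hδ, ?_⟩
  intro h hh hdist
  rw [Set.mem_Ioi] at hh
  rw [Real.dist_eq, sub_zero, abs_of_pos hh] at hdist
  have hint : IntervalIntegrable f volume a (a+h) := by
    apply ContinuousOn.intervalIntegrable
    apply hf.mono
    intro y hy
    exact le_trans (le_min ha (by linarith)) hy.1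
  have key : (h⁻¹ • ∫ u in a..(a+h), f u) - f a = h⁻¹ • ∫ u in a..(a+h), (f u - f a) := by
    rw [intervalIntegral.integral_sub hint intervalIntegrable_const,
      intervalIntegral.integral_const, add_sub_cancel_left, smul_sub, smul_smul,
      inv_mul_cancel₀ (ne_of_gt hh), one_smul]
  rw [dist_eq_norm, key, norm_smul, norm_inv, Real.norm_eq_abs, abs_of_pos hh]
  have hbound : ‖∫ u in a..(a+h), (f u - f a)‖ ≤ (ε/2) * |a + h - a| := by
    apply intervalIntegral.norm_integral_le_of_norm_le_const
    intro u hu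
    rw [Set.uIoc_of_le (by linarith : a ≤ a + h)] at hu
    have hu0 : u ∈ Set.Ici (0:ℝ) := le_trans ha (le_of_lt hu.1)
    have hud : dist u a < δ := by
      rw [Real.dist_eq, abs_of_nonneg (by linarith [hu.1])]
      linarith [hu.2]
    have := hδ' hu0 hud
    rw [dist_eq_norm] at this
    exact le_of_lt this
  rw [add_sub_cancel_left, abs_of_pos hh] at hbound
  calc h⁻¹ * ‖∫ u in a..(a+h), (f u - f a)‖ ≤ h⁻¹ * (ε/2 * h) := by
        apply mul_le_mul_of_nonneg_left hbound (le_of_lt (inv_pos.2 hh))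
    _ = ε/2 := by field_simp
    _ < ε := by linarith

lemma exp_slope (c : ℂ) :
    Tendsto (fun h : ℝ => h⁻¹ • (Complex.exp (c * h) - 1)) (𝓝[>] 0) (𝓝 c) := by
  have hd : HasDerivAt (fun h : ℝ => Complex.exp (c * h)) c 0 := by
    have h1 : HasDerivAt (fun z : ℂ => Complex.exp (c * z)) c 0 := by
      have := ((Complex.hasDerivAt_exp (c * 0)).comp 0
        ((hasDerivAt_id (0:ℂ)).const_mul c))
      simp at this; exact this
    simpa using h1.comp_ofReal
  have hs := hasDerivAt_iff_tendsto_slope.1 hd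
  have hmono : 𝓝[>] (0:ℝ) ≤ 𝓝[≠] (0:ℝ) :=
    nhdsWithin_mono 0 (fun y hy => ne_of_gt hy)
  refine (hs.mono_left hmono).congr ?_
  intro h
  rw [slope_def_module]
  simp

lemma T_tendsto_zero (x : X) : Tendsto (fun h : ℝ => S.T h x) (𝓝[>] 0) (𝓝 x) := by
  have := (S.strong_cont' x) 0 (by simp)
  have h2 : Tendsto (fun t : ℝ => S.T t x) (𝓝[Set.Ici 0] 0) (𝓝 (S.T 0 x)) := this
  rw [S.t_zero] at h2
  exact h2.mono_left (nhdsWithin_mono 0 (fun y hy => Set.mem_Ici.2 (le_of_lt hy)))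

lemma exp_tendsto (c : ℂ) : Tendsto (fun h : ℝ => Complex.exp (c * h)) (𝓝[>] 0) (𝓝 1) := by
  have h1 : Tendsto (fun h : ℝ => Complex.exp (c * h)) (𝓝 0) (𝓝 (Complex.exp (c * ((0:ℝ):ℂ)))) :=
    Continuous.tendsto (by fun_prop) 0
  have h2 := h1.mono_left (nhdsWithin_le_nhds : 𝓝[>] (0:ℝ) ≤ 𝓝 0)
  simpa using h2

lemma key_limit (c : ℂ) (t₀ : ℝ) (ht₀ : 0 ≤ t₀) (x : X) :
    Tendsto (fun h : ℝ => h⁻¹ • (S.T h (S.Bop' c t₀ x) - S.Bop' c t₀ x)) (𝓝[>] 0)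
      (𝓝 (c • S.Bop' c t₀ x - S.CopCLM c t₀ x)) := by
  have hlim : Tendsto (fun h : ℝ =>
      (h⁻¹ • (Complex.exp (c * h) - 1)) • S.Bop' c t₀ x
      + Complex.exp (c * h) • (h⁻¹ • ∫ u in t₀..(t₀+h), S.core c t₀ x u)
      - Complex.exp (c * h) • (h⁻¹ • ∫ u in (0:ℝ)..(0+h), S.core c t₀ x u)) (𝓝[>] 0)
      (𝓝 (c • S.Bop' c t₀ x + (1:ℂ) • S.core c t₀ x t₀ - (1:ℂ) • S.core c t₀ x 0)) := by
    refine Tendsto.sub (Tendsto.add ?_ ?_) ?_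
    · exact (exp_slope c).smul_const _
    · exact (exp_tendsto c).smul (avg_tendsto (S.core_contOn c t₀ x) ht₀)
    · exact (exp_tendsto c).smul (avg_tendsto (S.core_contOn c t₀ x) le_rfl)
  have hval : c • S.Bop' c t₀ x + (1:ℂ) • S.core c t₀ x t₀ - (1:ℂ) • S.core c t₀ x 0
      = c • S.Bop' c t₀ x - S.CopCLM c t₀ x := by
    simp only [core, one_smul, CopCLM_apply, sub_self, mul_zero, Complex.exp_zero,
      Complex.ofReal_zero, sub_zero, S.t_zero]
    abel
  rw [hval] at hlim
  refine hlim.congr' ?_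
  filter_upwards [self_mem_nhdsWithin] with h hh
  rw [Set.mem_Ioi] at hh
  have e1 : S.T h (S.Bop' c t₀ x) = S.Bop' c t₀ (S.T h x) :=
    (S.sComm_T h (le_of_lt hh)).bop' S c t₀ ht₀ x
  have e2 : S.Bop' c t₀ (S.T h x)
      = ∫ s in (0:ℝ)..t₀,
          (fun u : ℝ => Complex.exp (c * ((t₀:ℂ) + (h:ℂ) - (u:ℂ))) • S.T u x) (s + h) := by
    rw [Bop'_eq]
    apply intervalIntegral.integral_congr
    intro s hs
    have hs0 : 0 ≤ s := le_trans (le_min le_rfl ht₀) hs.1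
    simp only [core]
    rw [← S.t_add s h hs0 (le_of_lt hh)]
    congr 2
    push_cast
    ring
  have e3 : (∫ s in (0:ℝ)..t₀,
        (fun u : ℝ => Complex.exp (c * ((t₀:ℂ) + (h:ℂ) - (u:ℂ))) • S.T u x) (s + h))
      = ∫ u in h..(t₀+h), Complex.exp (c * ((t₀:ℂ) + (h:ℂ) - (u:ℂ))) • S.T u x := by
    have := intervalIntegral.integral_comp_add_right (a := (0:ℝ)) (b := t₀)
      (fun u : ℝ => Complex.exp (c * ((t₀:ℂ) + (h:ℂ) - (u:ℂ))) • S.T u x) h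
    rw [this, zero_add]
  have e4 : (∫ u in h..(t₀+h), Complex.exp (c * ((t₀:ℂ) + (h:ℂ) - (u:ℂ))) • S.T u x)
      = Complex.exp (c * h) • ∫ u in h..(t₀+h), S.core c t₀ x u := by
    rw [← intervalIntegral.integral_smul]
    apply intervalIntegral.integral_congr
    intro u hu
    simp only [core, smul_smul]
    rw [← Complex.exp_add]
    congr 2
    push_cast
    ring
  have i1 : IntervalIntegrable (S.core c t₀ x) volume 0 h :=
    S.core_integrable c t₀ x le_rfl (le_of_lt hh)
  have i2 : IntervalIntegrable (S.core c t₀ x) volume h (t₀+h) :=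
    S.core_integrable c t₀ x (le_of_lt hh) (by linarith)
  have i3 : IntervalIntegrable (S.core c t₀ x) volume 0 t₀ :=
    S.core_integrable c t₀ x le_rfl ht₀
  have i4 : IntervalIntegrable (S.core c t₀ x) volume t₀ (t₀+h) :=
    S.core_integrable c t₀ x ht₀ (by linarith)
  have e5 : (∫ u in h..(t₀+h), S.core c t₀ x u)
      = S.Bop' c t₀ x + (∫ u in t₀..(t₀+h), S.core c t₀ x u)
        - ∫ u in (0:ℝ)..(0+h), S.core c t₀ x u := by
    have a1 : (∫ u in (0:ℝ)..h, S.core c t₀ x u) + (∫ u in h..(t₀+h), S.core c t₀ x u)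
        = ∫ u in (0:ℝ)..(t₀+h), S.core c t₀ x u :=
      intervalIntegral.integral_add_adjacent_intervals i1 i2
    have a2 : (∫ u in (0:ℝ)..t₀, S.core c t₀ x u) + (∫ u in t₀..(t₀+h), S.core c t₀ x u)
        = ∫ u in (0:ℝ)..(t₀+h), S.core c t₀ x u :=
      intervalIntegral.integral_add_adjacent_intervals i3 i4
    rw [Bop'_eq, zero_add]
    rw [a2, ← a1]
    abel
  rw [e1, e2, e3, e4, e5]
  have halg : ∀ (r : ℝ) (e : ℂ) (B J1 J0 : X),
      (r • (e - 1)) • B + e • (r • J1) - e • (r • J0) = r • (e • (B + J1 - J0) - B) := by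
    intro r e B J1 J0
    rw [smul_assoc, sub_smul, one_smul, smul_comm e r J1, smul_comm e r J0,
      ← smul_add r, ← smul_sub r]
    congr 1
    rw [smul_sub e, smul_add e]
    abel
  exact halg h⁻¹ (Complex.exp (c * (h:ℂ))) _ _ _

section Generator

variable {A : X → X} {D : Set X}

lemma mem_D_of_tendsto (hgen : S.IsGenerator A D) {x v : X}
    (h : Tendsto (fun t : ℝ => t⁻¹ • (S.T t x - x)) (𝓝[>] 0) (𝓝 v)) : x ∈ D := by
  rw [hgen.1]; exact ⟨v, h⟩

lemma A_eq_of_tendsto (hgen : S.IsGenerator A D) {x v : X}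
    (h : Tendsto (fun t : ℝ => t⁻¹ • (S.T t x - x)) (𝓝[>] 0) (𝓝 v)) : A x = v :=
  tendsto_nhds_unique (hgen.2 x (S.mem_D_of_tendsto hgen h)) h

lemma Bop_mem_D (hgen : S.IsGenerator A D) (c : ℂ) (t₀ : ℝ) (ht₀ : 0 ≤ t₀) (x : X) :
    S.Bop' c t₀ x ∈ D :=
  S.mem_D_of_tendsto hgen (S.key_limit c t₀ ht₀ x)

lemma A_Bop (hgen : S.IsGenerator A D) (c : ℂ) (t₀ : ℝ) (ht₀ : 0 ≤ t₀) (x : X) :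
    A (S.Bop' c t₀ x) = c • S.Bop' c t₀ x - S.CopCLM c t₀ x :=
  S.A_eq_of_tendsto hgen (S.key_limit c t₀ ht₀ x)

lemma SComm.mem_D (hgen : S.IsGenerator A D) {L : X →L[ℂ] X} (hL : S.SComm L) {x : X}
    (hx : x ∈ D) : L x ∈ D ∧ A (L x) = L (A x) := by
  have hx' := hgen.2 x hx
  have h2 : Tendsto (fun h : ℝ => h⁻¹ • (S.T h (L x) - L x)) (𝓝[>] 0) (𝓝 (L (A x))) := by
    have hc := (L.continuous.tendsto (A x)).comp hx'
    refine hc.congr' ?_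
    filter_upwards [self_mem_nhdsWithin] with h hh
    rw [Set.mem_Ioi] at hh
    simp only [Function.comp_apply]
    rw [L.map_smul_of_tower, map_sub, hL h (le_of_lt hh) x]
  exact ⟨S.mem_D_of_tendsto hgen h2, S.A_eq_of_tendsto hgen h2⟩

lemma D_add (hgen : S.IsGenerator A D) {x y : X} (hx : x ∈ D) (hy : y ∈ D) :
    x + y ∈ D ∧ A (x + y) = A x + A y := by
  have h0 := (hgen.2 x hx).add (hgen.2 y hy)
  have h2 : Tendsto (fun t : ℝ => t⁻¹ • (S.T t (x + y) - (x + y))) (𝓝[>] 0)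
      (𝓝 (A x + A y)) := by
    refine h0.congr ?_
    intro t
    rw [← smul_add, map_add]
    congr 1
    abel
  exact ⟨S.mem_D_of_tendsto hgen h2, S.A_eq_of_tendsto hgen h2⟩

lemma D_smul (hgen : S.IsGenerator A D) (a : ℂ) {x : X} (hx : x ∈ D) :
    a • x ∈ D ∧ A (a • x) = a • A x := by
  have h0 := (hgen.2 x hx).const_smul a
  have h2 : Tendsto (fun t : ℝ => t⁻¹ • (S.T t (a • x) - a • x)) (𝓝[>] 0)
      (𝓝 (a • A x)) := by
    refine h0.congr ?_
    intro t
    rw [(S.T t).map_smul, ← smul_sub, smul_comm]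
  exact ⟨S.mem_D_of_tendsto hgen h2, S.A_eq_of_tendsto hgen h2⟩

lemma Bop_A_comm (hgen : S.IsGenerator A D) (c : ℂ) (t₀ : ℝ) (ht₀ : 0 ≤ t₀) {x : X}
    (hx : x ∈ D) : S.Bop' c t₀ (A x) = A (S.Bop' c t₀ x) := by
  have h := SComm.mem_D S hgen (S.sComm_Bop c t₀ ht₀) hx
  rw [BopCLM_apply] at h
  have h2 := h.2
  rw [show (S.BopCLM c t₀ ht₀) (A x) = S.Bop' c t₀ (A x) from rfl] at h2
  exact h2.symm

lemma Bop_P (hgen : S.IsGenerator A D) (c : ℂ) (t₀ : ℝ) (ht₀ : 0 ≤ t₀) {x : X}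
    (hx : x ∈ D) : S.Bop' c t₀ (c • x - A x) = S.CopCLM c t₀ x := by
  have h1 : S.Bop' c t₀ (c • x - A x)
      = c • S.Bop' c t₀ x - S.Bop' c t₀ (A x) := by
    have := (S.BopCLM c t₀ ht₀).map_sub (c • x) (A x)
    simp only [BopCLM_apply] at this
    rw [this, S.Bop'_smul]
  rw [h1, S.Bop_A_comm hgen c t₀ ht₀ hx, S.A_Bop hgen c t₀ ht₀ x]
  abel

end Generator

section Resolvent

lemma SComm.mul_T {L : X →L[ℂ] X} (hL : S.SComm L) (t : ℝ) (ht : 0 ≤ t) :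
    L * S.T t = S.T t * L := by
  ext x
  exact hL t ht x

noncomputable def muC (t₀ : ℝ) : ℂ := ((Real.log (‖S.T t₀‖ + 1) / t₀ : ℝ) : ℂ)

noncomputable def Zop (t₀ : ℝ) : X →L[ℂ] X :=
  Complex.exp (-(S.muC t₀) * t₀) • S.T t₀

lemma Zop_norm (t₀ : ℝ) (ht₀ : 0 < t₀) : ‖S.Zop t₀‖ < 1 := by
  rw [Zop]
  rw [norm_smul (Complex.exp (-(S.muC t₀) * t₀)) (S.T t₀)]
  have h1 : ‖Complex.exp (-(S.muC t₀) * t₀)‖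
      = Real.exp (-(Real.log (‖S.T t₀‖ + 1) / t₀ * t₀)) := by
    rw [Complex.norm_exp, muC]
    congr 1
    rw [show (-((Real.log (‖S.T t₀‖ + 1) / t₀ : ℝ) : ℂ) * (t₀:ℂ))
      = ((-(Real.log (‖S.T t₀‖ + 1) / t₀ * t₀) : ℝ) : ℂ) by push_cast; ring]
    rw [Complex.ofReal_re]
  rw [h1, div_mul_cancel₀ _ (ne_of_gt ht₀), Real.exp_neg,
    Real.exp_log (by positivity : (0:ℝ) < ‖S.T t₀‖ + 1)]
  have hTpos : (0:ℝ) < ‖S.T t₀‖ + 1 := by positivity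
  rw [inv_mul_eq_div, div_lt_one hTpos]
  linarith

lemma sComm_Z (t₀ : ℝ) (ht₀ : 0 ≤ t₀) : S.SComm (S.Zop t₀) :=
  (S.sComm_T t₀ ht₀).smul S _

noncomputable def Wunit (t₀ : ℝ) (ht₀ : 0 < t₀) : (X →L[ℂ] X)ˣ :=
  Units.oneSub (S.Zop t₀) (S.Zop_norm t₀ ht₀)

noncomputable def Wop (t₀ : ℝ) (ht₀ : 0 < t₀) : X →L[ℂ] X := ↑(S.Wunit t₀ ht₀)⁻¹

lemma Wunit_val (t₀ : ℝ) (ht₀ : 0 < t₀) : (S.Wunit t₀ ht₀ : X →L[ℂ] X) = 1 - S.Zop t₀ := rfl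

lemma sComm_W (t₀ : ℝ) (ht₀ : 0 < t₀) : S.SComm (S.Wop t₀ ht₀) := by
  intro t ht x
  have hc : Commute (S.T t) ((S.Wunit t₀ ht₀ : X →L[ℂ] X)) := by
    rw [Wunit_val]
    exact (Commute.one_right _).sub_right (((S.sComm_Z t₀ (le_of_lt ht₀)).mul_T S t ht).symm)
  have hc2 := hc.units_inv_right
  have h3 : S.T t * S.Wop t₀ ht₀ = S.Wop t₀ ht₀ * S.T t := hc2
  calc S.Wop t₀ ht₀ (S.T t x) = (S.Wop t₀ ht₀ * S.T t) x := rfl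
    _ = (S.T t * S.Wop t₀ ht₀) x := by rw [← h3]
    _ = S.T t (S.Wop t₀ ht₀ x) := rfl

noncomputable def Rop (t₀ : ℝ) (ht₀ : 0 < t₀) : X →L[ℂ] X :=
  Complex.exp (-(S.muC t₀) * t₀) •
    (S.BopCLM (S.muC t₀) t₀ (le_of_lt ht₀) * S.Wop t₀ ht₀)

lemma sComm_Rop (t₀ : ℝ) (ht₀ : 0 < t₀) : S.SComm (S.Rop t₀ ht₀) :=
  (((S.sComm_Bop (S.muC t₀) t₀ (le_of_lt ht₀)).mul S (S.sComm_W t₀ ht₀)).smul S _)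

lemma Rop_apply (t₀ : ℝ) (ht₀ : 0 < t₀) (x : X) :
    S.Rop t₀ ht₀ x = Complex.exp (-(S.muC t₀) * t₀) •
      S.Bop' (S.muC t₀) t₀ (S.Wop t₀ ht₀ x) := rfl

lemma smul_Cop (t₀ : ℝ) (x : X) :
    Complex.exp (-(S.muC t₀) * t₀) • S.CopCLM (S.muC t₀) t₀ x = x - S.Zop t₀ x := by
  rw [CopCLM_apply, smul_sub, smul_smul, ← Complex.exp_add]
  rw [show -(S.muC t₀) * t₀ + S.muC t₀ * t₀ = 0 by ring, Complex.exp_zero, one_smul]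
  rfl

section WithGen

variable {A : X → X} {D : Set X}

lemma Rop_mem_D (hgen : S.IsGenerator A D) (t₀ : ℝ) (ht₀ : 0 < t₀) (x : X) :
    S.Rop t₀ ht₀ x ∈ D := by
  rw [Rop_apply]
  exact (S.D_smul hgen _ (S.Bop_mem_D hgen _ t₀ (le_of_lt ht₀) _)).1

lemma g_Rop (hgen : S.IsGenerator A D) (t₀ : ℝ) (ht₀ : 0 < t₀) (x : X) :
    S.muC t₀ • S.Rop t₀ ht₀ x - A (S.Rop t₀ ht₀ x) = x := by
  have hmem := S.Bop_mem_D hgen (S.muC t₀) t₀ (le_of_lt ht₀) (S.Wop t₀ ht₀ x)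
  have hA : A (S.Rop t₀ ht₀ x) = Complex.exp (-(S.muC t₀) * t₀) •
      (S.muC t₀ • S.Bop' (S.muC t₀) t₀ (S.Wop t₀ ht₀ x)
        - S.CopCLM (S.muC t₀) t₀ (S.Wop t₀ ht₀ x)) := by
    rw [Rop_apply]
    rw [(S.D_smul hgen _ hmem).2, S.A_Bop hgen _ t₀ (le_of_lt ht₀) _]
  rw [hA, Rop_apply, smul_sub]
  rw [smul_comm (Complex.exp (-(S.muC t₀) * t₀)) (S.muC t₀)]
  rw [sub_sub_cancel, smul_Cop]
  calc S.Wop t₀ ht₀ x - S.Zop t₀ (S.Wop t₀ ht₀ x)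
      = ((1 - S.Zop t₀) * S.Wop t₀ ht₀) x := rfl
    _ = x := by
        rw [← S.Wunit_val t₀ ht₀, Wop, Units.mul_inv]
        rfl

lemma Rop_g (hgen : S.IsGenerator A D) (t₀ : ℝ) (ht₀ : 0 < t₀) {d : X} (hd : d ∈ D) :
    S.Rop t₀ ht₀ (S.muC t₀ • d - A d) = d := by
  have hWd : S.Wop t₀ ht₀ d ∈ D ∧ A (S.Wop t₀ ht₀ d) = S.Wop t₀ ht₀ (A d) :=
    SComm.mem_D S hgen (S.sComm_W t₀ ht₀) hd
  have hW : S.Wop t₀ ht₀ (S.muC t₀ • d - A d)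
      = S.muC t₀ • S.Wop t₀ ht₀ d - A (S.Wop t₀ ht₀ d) := by
    rw [map_sub, (S.Wop t₀ ht₀).map_smul, hWd.2]
  rw [Rop_apply, hW, S.Bop_P hgen _ t₀ (le_of_lt ht₀) hWd.1, smul_Cop]
  calc S.Wop t₀ ht₀ d - S.Zop t₀ (S.Wop t₀ ht₀ d)
      = ((1 - S.Zop t₀) * S.Wop t₀ ht₀) d := rfl
    _ = d := by
        rw [← S.Wunit_val t₀ ht₀, Wop, Units.mul_inv]
        rfl

end WithGen

end Resolvent

end C0Semigroup

section Main

open C0Semigroup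

set_option linter.unusedSectionVars false

variable {X : Type*} [NormedAddCommGroup X] [NormedSpace ℂ X] [CompleteSpace X]
variable (S : C0Semigroup X) {A : X → X} {D : Set X} (l : ℂ) (t₀ : ℝ)

lemma pow_apply_iter (L : X →L[ℂ] X) (k : ℕ) (z : X) : (L^k) z = (⇑L)^[k] z := by
  induction k with
  | zero => simp
  | succ m ih =>
    rw [pow_succ', Function.iterate_succ_apply', ContinuousLinearMap.mul_apply, ← ih]

lemma Bop_eq_Bop' (x : X) : Bop S l t₀ x = S.Bop' l t₀ x := rfl

noncomputable def gammaOp (ht₀ : 0 ≤ t₀) : X →L[ℂ] X :=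
  (S.muC t₀ - l) • S.BopCLM l t₀ ht₀ + S.CopCLM l t₀

lemma commute_BC (ht₀ : 0 ≤ t₀) :
    Commute (S.BopCLM l t₀ ht₀) (S.CopCLM l t₀) := by
  ext x
  simp only [ContinuousLinearMap.mul_apply]
  rw [BopCLM_apply, BopCLM_apply]
  exact ((S.sComm_Cop l t₀ ht₀).bop' S l t₀ ht₀ x).symm

lemma commute_gammaC (ht₀ : 0 ≤ t₀) :
    Commute (gammaOp S l t₀ ht₀) (S.CopCLM l t₀) := by
  apply Commute.add_left
  · exact ((commute_BC S l t₀ ht₀).smul_left _)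
  · exact Commute.refl _

lemma commute_gammaB (ht₀ : 0 ≤ t₀) :
    Commute (gammaOp S l t₀ ht₀) (S.BopCLM l t₀ ht₀) := by
  apply Commute.add_left
  · exact (Commute.refl _).smul_left _
  · exact (commute_BC S l t₀ ht₀).symm

section WithGen

lemma fg_mem_iff (hgen : S.IsGenerator A D) (ht₀ : 0 ≤ t₀) {x : X} (hx : x ∈ D) :
    ((fun y : X => l • y - A y) x ∈ D) ↔ ((fun y : X => S.muC t₀ • y - A y) x ∈ D) := by
  simp only
  constructor
  · intro h
    have := (S.D_add hgen h (S.D_smul hgen (S.muC t₀ - l) hx).1).1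
    rwa [show l • x - A x + (S.muC t₀ - l) • x = S.muC t₀ • x - A x by rw [sub_smul]; abel]
      at this
  · intro h
    have := (S.D_add hgen h (S.D_smul hgen (l - S.muC t₀) hx).1).1
    rwa [show S.muC t₀ • x - A x + (l - S.muC t₀) • x = l • x - A x by rw [sub_smul]; abel]
      at this

lemma f_g_swap (hgen : S.IsGenerator A D) (ht₀ : 0 ≤ t₀) {x : X} (hx : x ∈ D)
    (hfx : (l • x - A x) ∈ D) :
    (fun y : X => l • y - A y) ((fun y : X => S.muC t₀ • y - A y) x)
      = (fun y : X => S.muC t₀ • y - A y) ((fun y : X => l • y - A y) x) := by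
  simp only
  have hsm := S.D_smul hgen (S.muC t₀ - l) hx
  have hgx : S.muC t₀ • x - A x = (l • x - A x) + (S.muC t₀ - l) • x := by
    rw [sub_smul]; abel
  have hAg : A (S.muC t₀ • x - A x) = A (l • x - A x) + (S.muC t₀ - l) • A x := by
    rw [hgx, (S.D_add hgen hfx hsm.1).2, hsm.2]
  rw [hAg, hgx]
  module

lemma it_succ_iff (hgen : S.IsGenerator A D) (ht₀ : 0 ≤ t₀) (k : ℕ) :
    ∀ x : X, x ∈ iterDomain (fun y : X => l • y - A y) D (k+1)
      ↔ (x ∈ D ∧ (fun y : X => S.muC t₀ • y - A y) x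
          ∈ iterDomain (fun y : X => l • y - A y) D k) := by
  induction k with
  | zero =>
    intro x
    simp [iterDomain]
  | succ m ih =>
    intro x
    constructor
    · rintro ⟨hxD, hfx⟩
      have hfxD : (l • x - A x) ∈ D := hfx.1
      have hgxD : (S.muC t₀ • x - A x) ∈ D := (fg_mem_iff S l t₀ hgen ht₀ hxD).1 hfxD
      have h2 := (ih ((fun y : X => l • y - A y) x)).1 hfx
      refine ⟨hxD, hgxD, ?_⟩
      rw [f_g_swap S l t₀ hgen ht₀ hxD hfxD]
      exact h2.2
    · rintro ⟨hxD, hgxD, hfg⟩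
      have hfxD : (l • x - A x) ∈ D := (fg_mem_iff S l t₀ hgen ht₀ hxD).2 hgxD
      refine ⟨hxD, (ih _).2 ⟨hfxD, ?_⟩⟩
      rw [← f_g_swap S l t₀ hgen ht₀ hxD hfxD]
      exact hfg

lemma it_range (hgen : S.IsGenerator A D) (ht₀ : 0 < t₀) (k : ℕ) :
    ∀ x : X, x ∈ iterDomain (fun y : X => l • y - A y) D k
      ↔ ∃ v : X, (⇑(S.Rop t₀ ht₀))^[k] v = x := by
  induction k with
  | zero =>
    intro x
    simp [iterDomain]
  | succ m ih =>
    intro x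
    rw [it_succ_iff S l t₀ hgen (le_of_lt ht₀) m x]
    constructor
    · rintro ⟨hxD, hgx⟩
      obtain ⟨v, hv⟩ := (ih _).1 hgx
      refine ⟨v, ?_⟩
      rw [Function.iterate_succ_apply', hv]
      exact S.Rop_g hgen t₀ ht₀ hxD
    · rintro ⟨v, hv⟩
      rw [Function.iterate_succ_apply'] at hv
      have hxD : x ∈ D := hv ▸ S.Rop_mem_D hgen t₀ ht₀ _
      refine ⟨hxD, (ih _).2 ⟨v, ?_⟩⟩
      have h3 := S.g_Rop hgen t₀ ht₀ ((⇑(S.Rop t₀ ht₀))^[m] v)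
      rw [hv] at h3
      exact h3.symm

lemma it_subset_D (k : ℕ) :
    iterDomain (fun y : X => l • y - A y) D (k+1) ⊆ D := fun _ hx => hx.1

lemma iter_mem_D (k : ℕ) :
    ∀ x : X, x ∈ iterDomain (fun y : X => l • y - A y) D (k+1)
      → (fun y : X => l • y - A y)^[k] x ∈ D := by
  induction k with
  | zero => intro x hx; exact hx.1
  | succ m ih =>
    rintro x ⟨hxD, hfx⟩
    rw [Function.iterate_succ_apply]
    exact ih _ hfx

lemma g_f_iter (hgen : S.IsGenerator A D) (ht₀ : 0 ≤ t₀) (k : ℕ) :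
    ∀ x : X, x ∈ iterDomain (fun y : X => l • y - A y) D (k+1)
      → (fun y : X => S.muC t₀ • y - A y) ((fun y : X => l • y - A y)^[k] x)
        = (fun y : X => l • y - A y)^[k] ((fun y : X => S.muC t₀ • y - A y) x) := by
  induction k with
  | zero => intro x _; simp
  | succ m ih =>
    rintro x ⟨hxD, hfx⟩
    have hfxD : (l • x - A x) ∈ D := it_subset_D l m hfx
    rw [Function.iterate_succ_apply, ih _ hfx,
      ← f_g_swap S l t₀ hgen ht₀ hxD hfxD, Function.iterate_succ_apply]

lemma it_add (hgen : S.IsGenerator A D) (k : ℕ) :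
    ∀ x y : X, x ∈ iterDomain (fun y : X => l • y - A y) D k
      → y ∈ iterDomain (fun y : X => l • y - A y) D k
      → (x + y ∈ iterDomain (fun y : X => l • y - A y) D k
          ∧ (fun y : X => l • y - A y)^[k] (x + y)
            = (fun y : X => l • y - A y)^[k] x + (fun y : X => l • y - A y)^[k] y) := by
  induction k with
  | zero => intro x y _ _; simp [iterDomain]
  | succ m ih =>
    rintro x y ⟨hxD, hfx⟩ ⟨hyD, hfy⟩
    have hsum : l • (x + y) - A (x + y) = (l • x - A x) + (l • y - A y) := by
      rw [(S.D_add hgen hxD hyD).2, smul_add]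
      abel
    have hmem := ih _ _ hfx hfy
    have hf2 : (fun y : X => l • y - A y) (x + y)
        ∈ iterDomain (fun y : X => l • y - A y) D m := by
      show (l • (x + y) - A (x + y)) ∈ iterDomain (fun y : X => l • y - A y) D m
      rw [hsum]
      exact hmem.1
    refine ⟨⟨(S.D_add hgen hxD hyD).1, hf2⟩, ?_⟩
    rw [Function.iterate_succ_apply (fun y : X => l • y - A y) m (x+y),
      Function.iterate_succ_apply (fun y : X => l • y - A y) m x,
      Function.iterate_succ_apply (fun y : X => l • y - A y) m y]
    show (fun y : X => l • y - A y)^[m] (l • (x + y) - A (x + y))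
      = (fun y : X => l • y - A y)^[m] ((fun y : X => l • y - A y) x)
        + (fun y : X => l • y - A y)^[m] ((fun y : X => l • y - A y) y)
    rw [hsum]
    exact hmem.2

end WithGen

end Main

section Main2

open C0Semigroup

set_option linter.unusedSectionVars false

variable {X : Type*} [NormedAddCommGroup X] [NormedSpace ℂ X] [CompleteSpace X]
variable (S : C0Semigroup X) {A : X → X} {D : Set X} (l : ℂ) (t₀ : ℝ)

lemma sComm_apply_cl {L : X →L[ℂ] X} (hL : S.SComm L) (ht₀ : 0 ≤ t₀) (z : X) :
    L (S.CopCLM l t₀ z) = S.CopCLM l t₀ (L z) := by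
  rw [CopCLM_apply, CopCLM_apply, map_sub, L.map_smul, hL t₀ ht₀ z]

lemma gamma_f (hgen : S.IsGenerator A D) (ht₀ : 0 ≤ t₀) {x : X} (hx : x ∈ D) :
    gammaOp S l t₀ ht₀ ((fun y : X => l • y - A y) x)
      = S.CopCLM l t₀ ((fun y : X => S.muC t₀ • y - A y) x) := by
  have hB : S.Bop' l t₀ (l • x - A x) = S.CopCLM l t₀ x := S.Bop_P hgen l t₀ ht₀ hx
  have hgx : (S.muC t₀ • x - A x) = (l • x - A x) + (S.muC t₀ - l) • x := by
    rw [sub_smul]; abel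
  show gammaOp S l t₀ ht₀ (l • x - A x) = S.CopCLM l t₀ (S.muC t₀ • x - A x)
  rw [gammaOp, ContinuousLinearMap.add_apply, ContinuousLinearMap.smul_apply,
    BopCLM_apply, hB, hgx, map_add, (S.CopCLM l t₀).map_smul]
  abel

lemma gamma_pow_range (hgen : S.IsGenerator A D) (ht₀ : 0 ≤ t₀) (k : ℕ) :
    ∀ x ∈ iterDomain (fun y : X => l • y - A y) D k,
      ∃ v : X, ((gammaOp S l t₀ ht₀)^k) ((fun y : X => l • y - A y)^[k] x)
        = ((S.CopCLM l t₀)^k) v := by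
  induction k with
  | zero => intro x _; exact ⟨x, by simp⟩
  | succ m ih =>
    intro x hx
    have hfmD : (fun y : X => l • y - A y)^[m] x ∈ D := iter_mem_D l m x hx
    have e1 : ((gammaOp S l t₀ ht₀)^(m+1)) ((fun y : X => l • y - A y)^[m+1] x)
        = ((gammaOp S l t₀ ht₀)^m) (gammaOp S l t₀ ht₀
            ((fun y : X => l • y - A y) ((fun y : X => l • y - A y)^[m] x))) := by
      rw [pow_succ, ContinuousLinearMap.mul_apply, Function.iterate_succ_apply']
    rw [e1, gamma_f S l t₀ hgen ht₀ hfmD, g_f_iter S l t₀ hgen ht₀ m x hx]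
    have hcomm := ((commute_gammaC S l t₀ ht₀).pow_left m).eq
    have e2 : ∀ z : X, ((gammaOp S l t₀ ht₀)^m) (S.CopCLM l t₀ z)
        = S.CopCLM l t₀ (((gammaOp S l t₀ ht₀)^m) z) := by
      intro z
      calc ((gammaOp S l t₀ ht₀)^m) (S.CopCLM l t₀ z)
          = (((gammaOp S l t₀ ht₀)^m) * (S.CopCLM l t₀)) z := rfl
        _ = ((S.CopCLM l t₀) * ((gammaOp S l t₀ ht₀)^m)) z := by rw [hcomm]
        _ = S.CopCLM l t₀ (((gammaOp S l t₀ ht₀)^m) z) := rfl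
    rw [e2]
    have hgx : (fun y : X => S.muC t₀ • y - A y) x
        ∈ iterDomain (fun y : X => l • y - A y) D m :=
      ((it_succ_iff S l t₀ hgen ht₀ m x).1 hx).2
    obtain ⟨v, hv⟩ := ih _ hgx
    refine ⟨v, ?_⟩
    rw [hv, ← ContinuousLinearMap.mul_apply, ← pow_succ']

lemma it_mono (k : ℕ) :
    ∀ x : X, x ∈ iterDomain (fun y : X => l • y - A y) D (k+1)
      → x ∈ iterDomain (fun y : X => l • y - A y) D k := by
  induction k with
  | zero => intro x _; trivial
  | succ m ih =>
    rintro x ⟨hxD, hfx⟩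
    exact ⟨hxD, ih _ hfx⟩

lemma b_f_iter (hgen : S.IsGenerator A D) (ht₀ : 0 ≤ t₀) (k : ℕ) :
    ∀ x ∈ iterDomain (fun y : X => l • y - A y) D k,
      ((S.BopCLM l t₀ ht₀)^k) ((fun y : X => l • y - A y)^[k] x)
        = ((S.CopCLM l t₀)^k) x := by
  induction k with
  | zero => intro x _; simp
  | succ m ih =>
    intro x hx
    have hfmD : (fun y : X => l • y - A y)^[m] x ∈ D := iter_mem_D l m x hx
    have e1 : ((S.BopCLM l t₀ ht₀)^(m+1)) ((fun y : X => l • y - A y)^[m+1] x)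
        = ((S.BopCLM l t₀ ht₀)^m) (S.BopCLM l t₀ ht₀
            ((fun y : X => l • y - A y) ((fun y : X => l • y - A y)^[m] x))) := by
      rw [pow_succ, ContinuousLinearMap.mul_apply, Function.iterate_succ_apply']
    have hB : S.BopCLM l t₀ ht₀
        ((fun y : X => l • y - A y) ((fun y : X => l • y - A y)^[m] x))
        = S.CopCLM l t₀ ((fun y : X => l • y - A y)^[m] x) :=
      S.Bop_P hgen l t₀ ht₀ hfmD
    rw [e1, hB]
    have hcomm := ((commute_BC S l t₀ ht₀).pow_left m).eq
    have e2 : ((S.BopCLM l t₀ ht₀)^m)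
        (S.CopCLM l t₀ ((fun y : X => l • y - A y)^[m] x))
        = S.CopCLM l t₀ (((S.BopCLM l t₀ ht₀)^m) ((fun y : X => l • y - A y)^[m] x)) := by
      calc ((S.BopCLM l t₀ ht₀)^m) (S.CopCLM l t₀ ((fun y : X => l • y - A y)^[m] x))
          = (((S.BopCLM l t₀ ht₀)^m) * (S.CopCLM l t₀)) ((fun y : X => l • y - A y)^[m] x) := rfl
        _ = ((S.CopCLM l t₀) * ((S.BopCLM l t₀ ht₀)^m)) ((fun y : X => l • y - A y)^[m] x) := by
            rw [hcomm]
        _ = S.CopCLM l t₀ (((S.BopCLM l t₀ ht₀)^m)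
            ((fun y : X => l • y - A y)^[m] x)) := rfl
    rw [e2, ih x (it_mono l m x hx)]
    rw [← ContinuousLinearMap.mul_apply, ← pow_succ']

lemma Rop_gamma (hgen : S.IsGenerator A D) (ht₀ : 0 < t₀) (x : X) :
    S.Rop t₀ ht₀ (gammaOp S l t₀ (le_of_lt ht₀) x) = S.BopCLM l t₀ (le_of_lt ht₀) x := by
  have h1 : gammaOp S l t₀ (le_of_lt ht₀) x
      = S.muC t₀ • (S.Bop' l t₀ x) - A (S.Bop' l t₀ x) := by
    rw [S.A_Bop hgen l t₀ (le_of_lt ht₀) x, gammaOp, ContinuousLinearMap.add_apply,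
      ContinuousLinearMap.smul_apply, BopCLM_apply, sub_smul]
    abel
  rw [h1, S.Rop_g hgen t₀ ht₀ (S.Bop_mem_D hgen l t₀ (le_of_lt ht₀) x)]
  rfl

lemma Rop_iter_gamma (hgen : S.IsGenerator A D) (ht₀ : 0 < t₀) (k : ℕ) (x : X) :
    (⇑(S.Rop t₀ ht₀))^[k] (((gammaOp S l t₀ (le_of_lt ht₀))^k) x)
      = ((S.BopCLM l t₀ (le_of_lt ht₀))^k) x := by
  induction k generalizing x with
  | zero => simp
  | succ m ih =>
    have e1 : ((gammaOp S l t₀ (le_of_lt ht₀))^(m+1)) x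
        = gammaOp S l t₀ (le_of_lt ht₀) (((gammaOp S l t₀ (le_of_lt ht₀))^m) x) := by
      rw [pow_succ']; rfl
    have e3 : S.BopCLM l t₀ (le_of_lt ht₀) (((gammaOp S l t₀ (le_of_lt ht₀))^m) x)
        = ((gammaOp S l t₀ (le_of_lt ht₀))^m) (S.BopCLM l t₀ (le_of_lt ht₀) x) := by
      have hc := ((commute_gammaB S l t₀ (le_of_lt ht₀)).symm.pow_right m).eq
      calc S.BopCLM l t₀ (le_of_lt ht₀) (((gammaOp S l t₀ (le_of_lt ht₀))^m) x)
          = ((S.BopCLM l t₀ (le_of_lt ht₀)) * ((gammaOp S l t₀ (le_of_lt ht₀))^m)) x := rfl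
        _ = (((gammaOp S l t₀ (le_of_lt ht₀))^m) * (S.BopCLM l t₀ (le_of_lt ht₀))) x := by
            rw [hc]
        _ = ((gammaOp S l t₀ (le_of_lt ht₀))^m) (S.BopCLM l t₀ (le_of_lt ht₀) x) := rfl
    rw [Function.iterate_succ_apply, e1,
      Rop_gamma S l t₀ hgen ht₀ (((gammaOp S l t₀ (le_of_lt ht₀))^m) x), e3, ih]
    rw [← ContinuousLinearMap.mul_apply, ← pow_succ]

lemma rop_cl_pow (ht₀ : 0 < t₀) (k m : ℕ) (v : X) :
    (⇑(S.Rop t₀ ht₀))^[k] (((S.CopCLM l t₀)^m) v)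
      = ((S.CopCLM l t₀)^m) ((⇑(S.Rop t₀ ht₀))^[k] v) := by
  induction k generalizing v with
  | zero => rfl
  | succ j ih =>
    rw [Function.iterate_succ_apply, Function.iterate_succ_apply, ← ih]
    congr 1
    have hc : Commute (S.Rop t₀ ht₀) ((S.CopCLM l t₀)^m) := by
      apply Commute.pow_right
      ext z
      simp only [ContinuousLinearMap.mul_apply]
      exact sComm_apply_cl S l t₀ (S.sComm_Rop t₀ ht₀) (le_of_lt ht₀) z
    calc S.Rop t₀ ht₀ (((S.CopCLM l t₀)^m) v)
        = ((S.Rop t₀ ht₀) * ((S.CopCLM l t₀)^m)) v := rfl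
      _ = (((S.CopCLM l t₀)^m) * (S.Rop t₀ ht₀)) v := by rw [hc.eq]
      _ = ((S.CopCLM l t₀)^m) (S.Rop t₀ ht₀ v) := rfl

end Main2

/-- Step of Theorem 3.1: if `R((e^{λt₀} I − T(t₀))ⁿ)` is closed and
`N(B(λ,t₀)ⁿ) ⊆ R((λ I − A)ⁿ)`, then `R((λ I − A)ⁿ)` is closed. -/
theorem stmt14 {X : Type*} [NormedAddCommGroup X] [NormedSpace ℂ X] [CompleteSpace X]
    (S : C0Semigroup X) (A : X → X) (D : Set X) (hgen : S.IsGenerator A D)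
    (l : ℂ) (t₀ : ℝ) (ht₀ : 0 < t₀) (n : ℕ) (hn : 0 < n)
    (hclosed :
      IsClosed (Set.range ((Complex.exp (l * t₀) • (1 : X →L[ℂ] X) - S.T t₀) ^ n) : Set X))
    (hker : {x : X | (fun y : X => Bop S l t₀ y)^[n] x = 0}
      ⊆ (fun x : X => l • x - A x)^[n] '' iterDomain (fun x : X => l • x - A x) D n) :
    IsClosed ((fun x : X => l • x - A x)^[n] ''
      iterDomain (fun x : X => l • x - A x) D n) := by
  have ht₀le : (0:ℝ) ≤ t₀ := le_of_lt ht₀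
  have hseq : IsSeqClosed ((fun x : X => l • x - A x)^[n] ''
      iterDomain (fun x : X => l • x - A x) D n) := by
    intro x x₀ hx hlim
    choose u hu hu2 using hx
    have h1 : ∀ k : ℕ, ((gammaOp S l t₀ ht₀le)^n) (x k)
        ∈ Set.range ⇑((S.CopCLM l t₀)^n) := by
      intro k
      obtain ⟨v, hv⟩ := gamma_pow_range S l t₀ hgen ht₀le n (u k) (hu k)
      exact ⟨v, by rw [← hv, hu2 k]⟩
    have h2 : Tendsto (fun k => ((gammaOp S l t₀ ht₀le)^n) (x k)) atTop
        (𝓝 (((gammaOp S l t₀ ht₀le)^n) x₀)) :=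
      (((gammaOp S l t₀ ht₀le)^n).continuous.tendsto x₀).comp hlim
    have hcl : IsClosed (Set.range ⇑((S.CopCLM l t₀)^n)) := hclosed
    have h3 : ((gammaOp S l t₀ ht₀le)^n) x₀
        ∈ Set.range ⇑((S.CopCLM l t₀)^n) :=
      hcl.mem_of_tendsto h2 (Filter.Eventually.of_forall h1)
    obtain ⟨c₀, hc₀⟩ := h3
    set d := (⇑(S.Rop t₀ ht₀))^[n] c₀ with hd
    have hdmem : d ∈ iterDomain (fun y : X => l • y - A y) D n :=
      (it_range S l t₀ hgen ht₀ n d).2 ⟨c₀, rfl⟩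
    have hkey : ((S.CopCLM l t₀)^n) d = ((S.BopCLM l t₀ ht₀le)^n) x₀ := by
      rw [hd, ← rop_cl_pow S l t₀ ht₀ n n c₀, hc₀,
        Rop_iter_gamma S l t₀ hgen ht₀ n x₀]
    have hB : ∀ z : X, (fun y : X => Bop S l t₀ y)^[n] z = ((S.BopCLM l t₀ ht₀le)^n) z := by
      intro z
      rw [pow_apply_iter]
      rfl
    have hzero : (fun y : X => Bop S l t₀ y)^[n]
        (x₀ - (fun x : X => l • x - A x)^[n] d) = 0 := by
      rw [hB, map_sub, b_f_iter S l t₀ hgen ht₀le n d hdmem, hkey, sub_self]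
    have hker2 := hker hzero
    obtain ⟨e, he, he2⟩ := hker2
    have hsum := it_add S l hgen n e d he hdmem
    refine ⟨e + d, hsum.1, ?_⟩
    rw [hsum.2, he2]
    abel
  exact hseq.isClosed
end

section
/- Let (T(t))_{t≥0} be a strongly continuous semigroup on a Banach space X with generator A, and suppose λ ∈ ℂ is an approximate eigenvalue of A (i.e., there exist unit vectors xₙ ∈ D(A) with ‖(λ·I − A)xₙ‖ → 0). Then for every t > 0, e^{λt} is an approximate eigenvalue of T(t), i.e., ‖(e^{λt}·I − T(t))xₙ‖ → 0 for the same sequence. -/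
open Filter Topology MeasureTheory intervalIntegral

section Aux

variable {X : Type*} [NormedAddCommGroup X] [NormedSpace ℂ X]

/-- Right derivative of the orbit map `r ↦ T(r) x` at any `s ≥ 0`. -/
lemma C0Semigroup.hasDerivWithinAt_orbit (S : C0Semigroup X) {x y : X}
    (hx : Tendsto (fun t : ℝ => t⁻¹ • (S.T t x - x)) (𝓝[>] 0) (𝓝 y))
    {s : ℝ} (hs : 0 ≤ s) :
    HasDerivWithinAt (fun r => S.T r x) (S.T s y) (Set.Ici s) s := by
  rw [hasDerivWithinAt_iff_tendsto_slope, Set.Ici_sdiff_left]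
  have hsub : Tendsto (fun r : ℝ => r - s) (𝓝[>] s) (𝓝[>] (0:ℝ)) := by
    apply tendsto_nhdsWithin_of_tendsto_nhds_of_eventually_within
    · have h0 : Tendsto (fun r : ℝ => r - s) (𝓝 s) (𝓝 (s - s)) := tendsto_id.sub_const s
      simpa using h0.mono_left nhdsWithin_le_nhds
    · filter_upwards [self_mem_nhdsWithin] with r hr
      exact sub_pos.mpr (Set.mem_Ioi.mp hr)
  have hcomp : Tendsto (fun r : ℝ => S.T s ((r - s)⁻¹ • (S.T (r - s) x - x)))
      (𝓝[>] s) (𝓝 (S.T s y)) :=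
    ((S.T s).continuous.tendsto y).comp (hx.comp hsub)
  refine hcomp.congr' ?_
  filter_upwards [self_mem_nhdsWithin] with r hr
  have hr' : s < r := hr
  have h1 : S.T r x = S.T s (S.T (r - s) x) := by
    have h2 := S.map_add' s (r - s) hs (by linarith)
    rw [show s + (r - s) = r by ring] at h2
    rw [h2]; rfl
  rw [slope_def_module, h1, ← map_sub, ← (S.T s).map_smul_of_tower]

/-- The key integral identity. -/
lemma C0Semigroup.key_identity [CompleteSpace X] (S : C0Semigroup X) (A : X → X) {x : X}
    (hx : Tendsto (fun t : ℝ => t⁻¹ • (S.T t x - x)) (𝓝[>] 0) (𝓝 (A x)))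
    (l : ℂ) {t : ℝ} (ht : 0 < t) :
    Complex.exp (l * t) • x - S.T t x
      = ∫ s in (0:ℝ)..t, Complex.exp (l * (t - s)) • S.T s (l • x - A x) := by
  set g : ℝ → X := fun r => Complex.exp (l * (t - r)) • S.T r x with hg
  set F : ℝ → X := fun r => -(Complex.exp (l * (t - r)) • S.T r (l • x - A x)) with hF
  have hφ : ∀ r : ℝ, HasDerivAt (fun r : ℝ => Complex.exp (l * ((t:ℂ) - r)))
      (-(l * Complex.exp (l * ((t:ℂ) - r)))) r := by
    intro r
    have hin : HasDerivAt (fun z : ℂ => l * ((t:ℂ) - z)) (-l) (r : ℂ) := by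
      simpa using ((hasDerivAt_id ((r : ℝ) : ℂ)).const_sub (t:ℂ)).const_mul l
    have h1 : HasDerivAt (fun z : ℂ => Complex.exp (l * ((t:ℂ) - z)))
        (-(l * Complex.exp (l * ((t:ℂ) - (r:ℂ))))) (r : ℂ) := by
      have := (Complex.hasDerivAt_exp (l * ((t:ℂ) - (r:ℂ)))).comp (r : ℂ) hin
      simpa [Function.comp_def, mul_comm, neg_mul, mul_neg] using this
    exact h1.comp_ofReal
  have hderiv : ∀ r ∈ Set.Ioo (0:ℝ) t, HasDerivWithinAt g (F r) (Set.Ioi r) r := by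
    intro r hr
    have hu : HasDerivWithinAt (fun r => S.T r x) (S.T r (A x)) (Set.Ioi r) r :=
      (S.hasDerivWithinAt_orbit hx hr.1.le).mono Set.Ioi_subset_Ici_self
    have hc : HasDerivWithinAt (fun r : ℝ => Complex.exp (l * ((t:ℂ) - r)))
        (-(l * Complex.exp (l * ((t:ℂ) - r)))) (Set.Ioi r) r := (hφ r).hasDerivWithinAt
    have := hc.smul hu
    have heq : Complex.exp (l * ((t:ℂ) - r)) • S.T r (A x)
        + (-(l * Complex.exp (l * ((t:ℂ) - r)))) • S.T r x = F r := by
      simp only [hF, map_sub, ContinuousLinearMap.map_smul]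
      module
    have hcast : ∀ r : ℝ, Complex.exp (l * ((t:ℂ) - r)) = Complex.exp (l * ((t - r : ℝ) : ℂ)) := by
      intro r; push_cast; ring_nf
    rw [heq] at this
    refine this.congr (fun z _ => ?_) ?_ <;> simp [hg, hcast]
  have hcont : ContinuousOn g (Set.Icc 0 t) := by
    apply ContinuousOn.smul
    · exact (Complex.continuous_exp.comp (by continuity)).continuousOn
    · exact (S.strong_cont' x).mono Set.Icc_subset_Ici_self
  have hint : IntervalIntegrable F volume 0 t := by
    apply ContinuousOn.intervalIntegrable
    rw [Set.uIcc_of_le ht.le]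
    apply ContinuousOn.neg
    apply ContinuousOn.smul
    · exact (Complex.continuous_exp.comp (by continuity)).continuousOn
    · exact (S.strong_cont' (l • x - A x)).mono Set.Icc_subset_Ici_self
  have hFTC := intervalIntegral.integral_eq_sub_of_hasDeriv_right_of_le ht.le hcont hderiv hint
  have hFneg : ∫ s in (0:ℝ)..t, F s
      = -∫ s in (0:ℝ)..t, Complex.exp (l * (t - s)) • S.T s (l • x - A x) := by
    rw [← intervalIntegral.integral_neg]
  rw [hFneg] at hFTC
  have hg0 : g 0 = Complex.exp (l * t) • x := by
    simp [hg, S.map_zero']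
  have hgt : g t = S.T t x := by
    simp [hg]
  rw [neg_eq_iff_eq_neg] at hFTC
  rw [hFTC, hgt, hg0]
  abel

end Aux

/-- Forward spectral inclusion for the approximate point spectrum (Theorem 2.2):
if `xₙ ∈ D(A)` are unit vectors with `‖(λ I − A) xₙ‖ → 0`, then for every `t > 0`
we have `‖(e^{λt} I − T(t)) xₙ‖ → 0` for the same sequence. -/
theorem stmt18 {X : Type*} [NormedAddCommGroup X] [NormedSpace ℂ X] [CompleteSpace X]
    (S : C0Semigroup X) (A : X → X) (D : Set X) (hgen : S.IsGenerator A D)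
    (l : ℂ) (x : ℕ → X) (hxD : ∀ n, x n ∈ D) (hxnorm : ∀ n, ‖x n‖ = 1)
    (happrox : Tendsto (fun n => ‖l • x n - A (x n)‖) atTop (𝓝 0)) :
    ∀ t : ℝ, 0 < t →
      Tendsto (fun n => ‖Complex.exp (l * t) • x n - S.T t (x n)‖) atTop (𝓝 0) := by
  obtain ⟨hD, hA⟩ := hgen
  intro t ht
  obtain ⟨C, hC⟩ : ∃ C, ∀ s : Set.Icc (0:ℝ) t, ‖S.T (s : ℝ)‖ ≤ C := by
    apply banach_steinhaus
    intro v
    obtain ⟨B, hB⟩ := (isCompact_Icc (a := (0:ℝ)) (b := t)).exists_bound_of_continuousOn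
      ((S.strong_cont' v).mono Set.Icc_subset_Ici_self)
    exact ⟨B, fun s => hB s s.2⟩
  set E := Real.exp (|l.re| * t) with hE
  have bound : ∀ n, ‖Complex.exp (l * t) • x n - S.T t (x n)‖
      ≤ (E * C * ‖l • x n - A (x n)‖) * t := by
    intro n
    rw [S.key_identity A (hA (x n) (hxD n)) l ht]
    have hb : ∀ s ∈ Set.uIoc (0:ℝ) t,
        ‖Complex.exp (l * (t - s)) • S.T s (l • x n - A (x n))‖
          ≤ E * C * ‖l • x n - A (x n)‖ := by
      intro s hs
      rw [Set.uIoc_of_le ht.le] at hs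
      rw [norm_smul]
      have h1 : ‖Complex.exp (l * ((t:ℂ) - s))‖ ≤ E := by
        rw [Complex.norm_exp]
        apply Real.exp_le_exp.mpr
        have hre : (l * ((t:ℂ) - s)).re = l.re * (t - s) := by
          rw [show ((t:ℂ) - (s:ℂ)) = ((t - s : ℝ) : ℂ) by push_cast; ring,
            mul_comm, Complex.re_ofReal_mul]
          ring
        rw [hre]
        calc l.re * (t - s)
            ≤ |l.re| * (t - s) := mul_le_mul_of_nonneg_right (le_abs_self _) (by linarith [hs.2])
          _ ≤ |l.re| * t := mul_le_mul_of_nonneg_left (by linarith [hs.1]) (abs_nonneg _)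
      have h2 : ‖S.T s (l • x n - A (x n))‖ ≤ C * ‖l • x n - A (x n)‖ :=
        le_trans ((S.T s).le_opNorm _)
          (by gcongr; exact hC ⟨s, hs.1.le, hs.2⟩)
      calc ‖Complex.exp (l * ((t:ℂ) - s))‖ * ‖S.T s (l • x n - A (x n))‖
          ≤ E * (C * ‖l • x n - A (x n)‖) := by
            apply mul_le_mul h1 h2 (norm_nonneg _) (Real.exp_nonneg _)
        _ = E * C * ‖l • x n - A (x n)‖ := by ring
    have := intervalIntegral.norm_integral_le_of_norm_le_const hb
    simpa [abs_of_pos ht] using this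
  apply squeeze_zero (fun n => norm_nonneg _) bound
  have h := (happrox.const_mul (E * C)).mul_const t
  simpa using h
end

section
/- Let A, B, C, D be mutually commuting bounded linear operators on a Banach space X with C∘A + D∘B = I, and let n be a positive integer. Then dim(R(Aⁿ)/R(A^{n+1})) ≤ dim(R((A∘B)ⁿ)/R((A∘B)^{n+1})), in the sense that if the latter quotient is finite-dimensional then so is the former, with the stated inequality of dimensions. -/
/-- Algebraic ingredient of Theorem 3.1: if `A, B, C, D` are mutually commuting bounded
operators with `C ∘ A + D ∘ B = I` and `n ≥ 1`, then
`dim (R(Aⁿ)/R(A^{n+1})) ≤ dim (R((A∘B)ⁿ)/R((A∘B)^{n+1}))`: if the latter quotient is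
finite dimensional then so is the former, with the corresponding inequality of dimensions. -/
theorem stmt19 {X : Type*} [NormedAddCommGroup X] [NormedSpace ℂ X] [CompleteSpace X]
    (A B C D : X →L[ℂ] X)
    (hAB : Commute A B) (hAC : Commute A C) (hAD : Commute A D)
    (hBC : Commute B C) (hBD : Commute B D) (hCD : Commute C D)
    (h : C * A + D * B = 1) (n : ℕ) (hn : 0 < n)
    [FiniteDimensional ℂ
      (↥(LinearMap.range ((A * B) ^ n : X →ₗ[ℂ] X)) ⧸
        (LinearMap.range ((A * B) ^ (n + 1) : X →ₗ[ℂ] X)).comap (LinearMap.range ((A * B) ^ n : X →ₗ[ℂ] X)).subtype)] :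
    FiniteDimensional ℂ
      (↥(LinearMap.range (A ^ n : X →ₗ[ℂ] X)) ⧸
        (LinearMap.range (A ^ (n + 1) : X →ₗ[ℂ] X)).comap (LinearMap.range (A ^ n : X →ₗ[ℂ] X)).subtype) ∧
    Module.finrank ℂ
      (↥(LinearMap.range (A ^ n : X →ₗ[ℂ] X)) ⧸
        (LinearMap.range (A ^ (n + 1) : X →ₗ[ℂ] X)).comap (LinearMap.range (A ^ n : X →ₗ[ℂ] X)).subtype) ≤
    Module.finrank ℂ
      (↥(LinearMap.range ((A * B) ^ n : X →ₗ[ℂ] X)) ⧸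
        (LinearMap.range ((A * B) ^ (n + 1) : X →ₗ[ℂ] X)).comap (LinearMap.range ((A * B) ^ n : X →ₗ[ℂ] X)).subtype) := by
  have hm : ((A : X →ₗ[ℂ] X) * B) = ((A * B : X →L[ℂ] X) : X →ₗ[ℂ] X) := rfl
  have hc : ∀ (T : X →L[ℂ] X) (k : ℕ), ((T : X →ₗ[ℂ] X) ^ k) = ((T ^ k : X →L[ℂ] X) : X →ₗ[ℂ] X) := by
    intro T k
    induction k with
    | zero => rfl
    | succ k ih => rw [pow_succ, pow_succ, ih]; rfl
  have hfin := ‹FiniteDimensional ℂ (↥(LinearMap.range ((A * B) ^ n : X →ₗ[ℂ] X)) ⧸ (LinearMap.range ((A * B) ^ (n + 1) : X →ₗ[ℂ] X)).comap (LinearMap.range ((A * B) ^ n : X →ₗ[ℂ] X)).subtype)›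
  rw [hm, hc A n, hc A (n + 1), hc (A * B) n, hc (A * B) (n + 1)]
  rw [hm, hc (A * B) n, hc (A * B) (n + 1)] at hfin
  -- pointwise version of the identity `C∘A + D∘B = 1`
  have hx : ∀ x : X, C (A x) + D (B x) = x := by
    intro x
    have := ContinuousLinearMap.ext_iff.mp h x
    simpa [ContinuousLinearMap.add_apply, ContinuousLinearMap.mul_apply] using this
  -- basic range facts
  have fact1 : ∀ x : X, x ∈ LinearMap.range ((A ^ n : X →L[ℂ] X) : X →ₗ[ℂ] X) →
      (B ^ (n + 1)) x ∈ LinearMap.range (((A * B) ^ n : X →L[ℂ] X) : X →ₗ[ℂ] X) := by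
    rintro x ⟨u, rfl⟩
    refine ⟨B u, ?_⟩
    have e1 : (A * B) ^ n * B = B ^ (n + 1) * A ^ n := by
      calc (A * B) ^ n * B = A ^ n * B ^ (n + 1) := by
            rw [hAB.mul_pow, mul_assoc, ← pow_succ]
        _ = B ^ (n + 1) * A ^ n := (hAB.pow_pow n (n + 1)).eq
    calc ((A * B) ^ n) (B u) = ((A * B) ^ n * B) u := rfl
      _ = (B ^ (n + 1) * A ^ n) u := by rw [e1]
      _ = (B ^ (n + 1)) ((A ^ n) u) := rfl
  have fact2 : ∀ x : X, x ∈ LinearMap.range ((A ^ (n + 1) : X →L[ℂ] X) : X →ₗ[ℂ] X) →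
      (B ^ (n + 1)) x ∈ LinearMap.range (((A * B) ^ (n + 1) : X →L[ℂ] X) : X →ₗ[ℂ] X) := by
    rintro x ⟨u, rfl⟩
    refine ⟨u, ?_⟩
    have e1 : (A * B) ^ (n + 1) = B ^ (n + 1) * A ^ (n + 1) := by
      rw [hAB.mul_pow]; exact (hAB.pow_pow (n + 1) (n + 1)).eq
    calc ((A * B) ^ (n + 1)) u = ((A * B) ^ (n + 1)) u := rfl
      _ = (B ^ (n + 1) * A ^ (n + 1)) u := by rw [e1]
      _ = (B ^ (n + 1)) ((A ^ (n + 1)) u) := rfl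
  have fact3 : ∀ x : X, x ∈ LinearMap.range (((A * B) ^ (n + 1) : X →L[ℂ] X) : X →ₗ[ℂ] X) →
      x ∈ LinearMap.range ((A ^ (n + 1) : X →L[ℂ] X) : X →ₗ[ℂ] X) := by
    rintro x ⟨u, rfl⟩
    refine ⟨(B ^ (n + 1)) u, ?_⟩
    calc (A ^ (n + 1)) ((B ^ (n + 1)) u) = (A ^ (n + 1) * B ^ (n + 1)) u := rfl
      _ = ((A * B) ^ (n + 1)) u := by rw [hAB.mul_pow]
  -- B preserves the range of Aⁿ
  have Bmem : ∀ x : X, x ∈ LinearMap.range ((A ^ n : X →L[ℂ] X) : X →ₗ[ℂ] X) → B x ∈ LinearMap.range ((A ^ n : X →L[ℂ] X) : X →ₗ[ℂ] X) := by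
    rintro x ⟨u, rfl⟩
    refine ⟨B u, ?_⟩
    calc (A ^ n) (B u) = (A ^ n * B) u := rfl
      _ = (B * A ^ n) u := by rw [((hAB.symm).pow_right n).eq]
      _ = B ((A ^ n) u) := rfl
  -- key step: if x ∈ R(Aⁿ) and B x ∈ R(A^{n+1}) then x ∈ R(A^{n+1})
  have step : ∀ x : X, x ∈ LinearMap.range ((A ^ n : X →L[ℂ] X) : X →ₗ[ℂ] X) →
      B x ∈ LinearMap.range ((A ^ (n + 1) : X →L[ℂ] X) : X →ₗ[ℂ] X) → x ∈ LinearMap.range ((A ^ (n + 1) : X →L[ℂ] X) : X →ₗ[ℂ] X) := by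
    rintro x ⟨u, rfl⟩ ⟨v, hv⟩
    change (A ^ (n + 1)) v = B ((A ^ n) u) at hv
    refine ⟨C u + D v, ?_⟩
    calc (A ^ (n + 1)) (C u + D v)
        = (A ^ (n + 1) * C) u + (A ^ (n + 1) * D) v := by
          rw [map_add]; rfl
      _ = (C * A ^ (n + 1)) u + (D * A ^ (n + 1)) v := by
          rw [(hAC.pow_left (n + 1)).eq, (hAD.pow_left (n + 1)).eq]
      _ = C ((A ^ (n + 1)) u) + D ((A ^ (n + 1)) v) := rfl
      _ = C (A ((A ^ n) u)) + D (B ((A ^ n) u)) := by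
          rw [hv, pow_succ']
          rfl
      _ = (A ^ n) u := hx _
  -- iterated version
  have iter : ∀ (k : ℕ) (x : X), x ∈ LinearMap.range ((A ^ n : X →L[ℂ] X) : X →ₗ[ℂ] X) →
      (B ^ k) x ∈ LinearMap.range ((A ^ (n + 1) : X →L[ℂ] X) : X →ₗ[ℂ] X) → x ∈ LinearMap.range ((A ^ (n + 1) : X →L[ℂ] X) : X →ₗ[ℂ] X) := by
    intro k
    induction k with
    | zero => intro x _ hb; simpa using hb
    | succ k ih =>
      intro x hxn hb
      have hBx : B x ∈ LinearMap.range ((A ^ n : X →L[ℂ] X) : X →ₗ[ℂ] X) := Bmem x hxn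
      have hBk : (B ^ k) (B x) ∈ LinearMap.range ((A ^ (n + 1) : X →L[ℂ] X) : X →ₗ[ℂ] X) := by
        have : (B ^ (k + 1)) x = (B ^ k) (B x) := by
          calc (B ^ (k + 1)) x = (B ^ k * B) x := by rw [pow_succ]
            _ = (B ^ k) (B x) := rfl
        rwa [this] at hb
      exact step x hxn (ih (B x) hBx hBk)
  -- set up the quotient spaces
  set M : Submodule ℂ X := LinearMap.range (((A * B) ^ n : X →L[ℂ] X) : X →ₗ[ℂ] X) with hM
  set M' := (LinearMap.range (((A * B) ^ (n + 1) : X →L[ℂ] X) : X →ₗ[ℂ] X)).comap M.subtype with hM'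
  set N : Submodule ℂ X := LinearMap.range ((A ^ n : X →L[ℂ] X) : X →ₗ[ℂ] X) with hN
  set N' := (LinearMap.range ((A ^ (n + 1) : X →L[ℂ] X) : X →ₗ[ℂ] X)).comap N.subtype with hN'
  -- the map x ↦ B^{n+1} x from N to M
  let φ : N →ₗ[ℂ] M :=
    LinearMap.codRestrict M (((B ^ (n + 1)).toLinearMap).comp N.subtype)
      (fun x => fact1 x.1 x.2)
  let g : N →ₗ[ℂ] M ⧸ M' := M'.mkQ.comp φ
  have hker : N' ≤ LinearMap.ker g := by
    intro x hxmem
    have hx' : (x : X) ∈ LinearMap.range ((A ^ (n + 1) : X →L[ℂ] X) : X →ₗ[ℂ] X) := hxmem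
    have : (B ^ (n + 1)) (x : X) ∈ LinearMap.range (((A * B) ^ (n + 1) : X →L[ℂ] X) : X →ₗ[ℂ] X) := fact2 _ hx'
    show M'.mkQ (φ x) = 0
    rw [Submodule.mkQ_apply, Submodule.Quotient.mk_eq_zero]
    exact this
  have hker' : LinearMap.ker g ≤ N' := by
    intro x hxker
    have h0 : M'.mkQ (φ x) = 0 := hxker
    rw [Submodule.mkQ_apply, Submodule.Quotient.mk_eq_zero] at h0
    have h1 : (B ^ (n + 1)) (x : X) ∈ LinearMap.range (((A * B) ^ (n + 1) : X →L[ℂ] X) : X →ₗ[ℂ] X) := h0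
    have h2 : (B ^ (n + 1)) (x : X) ∈ LinearMap.range ((A ^ (n + 1) : X →L[ℂ] X) : X →ₗ[ℂ] X) := fact3 _ h1
    exact iter (n + 1) (x : X) x.2 h2
  let F : (N ⧸ N') →ₗ[ℂ] (M ⧸ M') := N'.liftQ g hker
  have hFinj : Function.Injective F := by
    rw [← LinearMap.ker_eq_bot]
    exact Submodule.ker_liftQ_eq_bot N' g hker hker'
  have hfd : FiniteDimensional ℂ (N ⧸ N') := FiniteDimensional.of_injective F hFinj
  exact ⟨hfd, LinearMap.finrank_le_finrank_of_injective hFinj⟩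
end
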